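/- arXiv:1904.12112 — 2 statements merged into one kernel-verified Lean document; each statement's English description precedes it below -/
import Mathlib

section
/- Cutting preserves solvability: Let B = {B1,...,Bm} be a multiset of regular blocks, wmax and hmax the maximal block width and height, and C a set of non-overlapping containers. Then (B, C) has a solution if and only if (B, σ(C,[wmax,hmax])) has a solution; moreover, the solutions of the two problems coincide as assignments of locations to blocks. -/
/-- The half-open rectangular region `[x, x+w) × [y, y+h) ⊆ ℤ²`. -/
def Reg (x y w h : ℤ) : Set (ℤ × ℤ) :=
  Set.Ico x (x + w) ×ˢ Set.Ico y (y + h)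

/-- Region of a container given as a tuple `(x, y, w, h)`. -/
def RegT (c : ℤ × ℤ × ℤ × ℤ) : Set (ℤ × ℤ) :=
  Reg c.1 c.2.1 c.2.2.1 c.2.2.2

/-- A solution to the constrained packing problem. -/
def IsSolution (m : ℕ) (wB hB : Fin m → ℤ) (𝒞 : Set (ℤ × ℤ × ℤ × ℤ))
    (x y : Fin m → ℤ) : Prop :=
  (∀ i, wB i ∣ x i ∧ hB i ∣ y i) ∧
  (∀ i j, i ≠ j →
    Reg (x i) (y i) (wB i) (hB i) ∩ Reg (x j) (y j) (wB j) (hB j) = ∅) ∧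
  (∀ i, ∃ c ∈ 𝒞, Reg (x i) (y i) (wB i) (hB i) ⊆ RegT c)

/-- `S` is a finite set of pairwise non-overlapping regular aligned containers of
size `⪯ [w,h]` whose union is the container `c`. -/
def GoodCut (q1 q2 : ℕ) (w h : ℤ) (c : ℤ × ℤ × ℤ × ℤ)
    (S : Set (ℤ × ℤ × ℤ × ℤ)) : Prop :=
  S.Finite ∧
  (∀ d ∈ S, ∃ a b : ℕ,
      d.2.2.1 = (q1 : ℤ) ^ a ∧ d.2.2.2 = (q2 : ℤ) ^ b ∧
      d.2.2.1 ∣ d.1 ∧ d.2.2.2 ∣ d.2.1 ∧ d.2.2.1 ≤ w ∧ d.2.2.2 ≤ h) ∧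
  (∀ d ∈ S, ∀ d' ∈ S, d ≠ d' → RegT d ∩ RegT d' = ∅) ∧
  (⋃ d ∈ S, RegT d) = RegT c

/-- `σ(c,[w,h])`: `S` is a smallest good cut of `c`. -/
def SigmaCut (q1 q2 : ℕ) (w h : ℤ) (c : ℤ × ℤ × ℤ × ℤ)
    (S : Set (ℤ × ℤ × ℤ × ℤ)) : Prop :=
  GoodCut q1 q2 w h c S ∧ ∀ T, GoodCut q1 q2 w h c T → S.ncard ≤ T.ncard

lemma Reg_def (x y w h : ℤ) : Reg x y w h = Set.Ico x (x + w) ×ˢ Set.Ico y (y + h) := rfl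

lemma RegT_def (c : ℤ × ℤ × ℤ × ℤ) :
    RegT c = Set.Ico c.1 (c.1 + c.2.2.1) ×ˢ Set.Ico c.2.1 (c.2.1 + c.2.2.2) := rfl

lemma Ico_nested {u v x x' : ℤ} (hu : 0 < u) (huv : u ∣ v) (hx : u ∣ x) (hx' : v ∣ x')
    (hne : (Set.Ico x (x + u) ∩ Set.Ico x' (x' + v)).Nonempty) :
    Set.Ico x (x + u) ⊆ Set.Ico x' (x' + v) := by
  obtain ⟨t, ⟨h1, h2⟩, ⟨h3, h4⟩⟩ := hne
  obtain ⟨k, hk⟩ : u ∣ (x - x') := dvd_sub hx (huv.trans hx')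
  obtain ⟨s, hs⟩ := huv
  have h5 : u * (-1) < u * k := by rw [mul_neg_one]; linarith
  have hk1 : (-1 : ℤ) < k := lt_of_mul_lt_mul_left h5 hu.le
  have hks : k < s := lt_of_mul_lt_mul_left (by linarith : u * k < u * s) hu.le
  have h6 : 0 ≤ u * k := mul_nonneg hu.le (by omega)
  have h7 : u * (k + 1) ≤ u * s := mul_le_mul_of_nonneg_left (by omega) hu.le
  have h8 : u * (k + 1) = u * k + u := by ring
  exact Set.Ico_subset_Ico (by linarith) (by linarith)

lemma Reg_nonempty {x y w h : ℤ} (hw : 0 < w) (hh : 0 < h) : (Reg x y w h).Nonempty :=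
  ⟨(x, y), by simp [Reg, Set.mem_Ico]; omega⟩

lemma key (q1 q2 : ℕ) (hq1 : 1 < q1) (hq2 : 1 < q2) (amax bmax : ℕ)
    (c : ℤ × ℤ × ℤ × ℤ) (S : Set (ℤ × ℤ × ℤ × ℤ))
    (hS : SigmaCut q1 q2 ((q1 : ℤ) ^ amax) ((q2 : ℤ) ^ bmax) c S) :
    ∀ n a b, a ≤ amax → b ≤ bmax → amax - a + (bmax - b) ≤ n →
      ∀ X Y : ℤ, ((q1 : ℤ) ^ a) ∣ X → ((q2 : ℤ) ^ b) ∣ Y →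
      Reg X Y ((q1 : ℤ) ^ a) ((q2 : ℤ) ^ b) ⊆ RegT c →
      ∃ d ∈ S, Reg X Y ((q1 : ℤ) ^ a) ((q2 : ℤ) ^ b) ⊆ RegT d := by
  have hq1' : (1 : ℤ) < (q1 : ℤ) := by exact_mod_cast hq1
  have hq2' : (1 : ℤ) < (q2 : ℤ) := by exact_mod_cast hq2
  obtain ⟨⟨hSfin, hSreg, hSdisj, hScov⟩, hSmin⟩ := hS
  intro n
  induction n using Nat.strong_induction_on with
  | _ n IH =>
  intro a b ha hb hn X Y hX hY hQc
  by_contra hdone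
  push_neg at hdone
  have hw0 : (0 : ℤ) < (q1 : ℤ) ^ a := pow_pos (by linarith) a
  have hh0 : (0 : ℤ) < (q2 : ℤ) ^ b := pow_pos (by linarith) b
  set P : Set (ℤ × ℤ × ℤ × ℤ) :=
    {d | d ∈ S ∧ (RegT d ∩ Reg X Y ((q1 : ℤ) ^ a) ((q2 : ℤ) ^ b)).Nonempty} with hPdef
  have hPcov : ∀ t ∈ Reg X Y ((q1 : ℤ) ^ a) ((q2 : ℤ) ^ b), ∃ d ∈ P, t ∈ RegT d := by
    intro t ht
    have h1 : t ∈ RegT c := hQc ht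
    rw [← hScov] at h1
    simp only [Set.mem_iUnion] at h1
    obtain ⟨d, hdS, htd⟩ := h1
    exact ⟨d, ⟨hdS, ⟨t, htd, ht⟩⟩, htd⟩
  -- derive exponent bounds helper
  have hQne : (Reg X Y ((q1 : ℤ) ^ a) ((q2 : ℤ) ^ b)).Nonempty := Reg_nonempty hw0 hh0
  have hQcx : Set.Ico X (X + (q1 : ℤ) ^ a) ⊆ Set.Ico c.1 (c.1 + c.2.2.1) ∧
      Set.Ico Y (Y + (q2 : ℤ) ^ b) ⊆ Set.Ico c.2.1 (c.2.1 + c.2.2.2) := by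
    rcases Set.prod_subset_prod_iff.mp hQc with h | h | h
    · exact h
    · exfalso; have : X ∈ Set.Ico X (X + (q1 : ℤ) ^ a) := ⟨le_refl _, by linarith⟩
      rw [h] at this; exact this
    · exfalso; have : Y ∈ Set.Ico Y (Y + (q2 : ℤ) ^ b) := ⟨le_refl _, by linarith⟩
      rw [h] at this; exact this
  -- classification
  have hclass : ∀ d ∈ P, RegT d ⊆ Reg X Y ((q1 : ℤ) ^ a) ((q2 : ℤ) ^ b) ∨
      (∃ f : ℕ, f ≤ bmax ∧ b < f ∧ (q2 : ℤ) ^ f ∣ d.2.1 ∧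
        Set.Ico d.2.1 (d.2.1 + (q2 : ℤ) ^ f) ⊆ Set.Ico c.2.1 (c.2.1 + c.2.2.2) ∧
        Set.Ico Y (Y + (q2 : ℤ) ^ b) ⊆ Set.Ico d.2.1 (d.2.1 + (q2 : ℤ) ^ f)) ∨
      (∃ e : ℕ, e ≤ amax ∧ a < e ∧ (q1 : ℤ) ^ e ∣ d.1 ∧
        Set.Ico d.1 (d.1 + (q1 : ℤ) ^ e) ⊆ Set.Ico c.1 (c.1 + c.2.2.1) ∧
        Set.Ico X (X + (q1 : ℤ) ^ a) ⊆ Set.Ico d.1 (d.1 + (q1 : ℤ) ^ e)) := by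
    intro d hdP
    obtain ⟨hdS, hdne⟩ := hdP
    obtain ⟨e, f, hdw, hdh, hdvdx, hdvdy, hlew, hleh⟩ := hSreg d hdS
    have he : e ≤ amax := (pow_le_pow_iff_right₀ hq1').mp (hdw ▸ hlew)
    have hf : f ≤ bmax := (pow_le_pow_iff_right₀ hq2').mp (hdh ▸ hleh)
    have hdvdx' : (q1 : ℤ) ^ e ∣ d.1 := hdw ▸ hdvdx
    have hdvdy' : (q2 : ℤ) ^ f ∣ d.2.1 := hdh ▸ hdvdy
    obtain ⟨t, htd, htQ⟩ := hdne
    have htd1 : t.1 ∈ Set.Ico d.1 (d.1 + (q1 : ℤ) ^ e) := by rw [← hdw]; exact htd.1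
    have htd2 : t.2 ∈ Set.Ico d.2.1 (d.2.1 + (q2 : ℤ) ^ f) := by rw [← hdh]; exact htd.2
    have hdc : RegT d ⊆ RegT c := by
      rw [← hScov]; exact Set.subset_biUnion_of_mem hdS
    have hdcx : Set.Ico d.1 (d.1 + (q1 : ℤ) ^ e) ⊆ Set.Ico c.1 (c.1 + c.2.2.1) ∧
        Set.Ico d.2.1 (d.2.1 + (q2 : ℤ) ^ f) ⊆ Set.Ico c.2.1 (c.2.1 + c.2.2.2) := by
      rw [RegT_def d, RegT_def c, hdw, hdh] at hdc
      rcases Set.prod_subset_prod_iff.mp hdc with h | h | h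
      · exact h
      · exfalso; rw [h] at htd1; exact htd1
      · exfalso; rw [h] at htd2; exact htd2
    by_cases hbf : b < f
    · right; left
      refine ⟨f, hf, hbf, hdvdy', hdcx.2, ?_⟩
      exact Ico_nested hh0 (pow_dvd_pow _ hbf.le) hY hdvdy' ⟨t.2, htQ.2, htd2⟩
    · push_neg at hbf
      have hyd : Set.Ico d.2.1 (d.2.1 + (q2 : ℤ) ^ f) ⊆ Set.Ico Y (Y + (q2 : ℤ) ^ b) :=
        Ico_nested (pow_pos (by linarith) f) (pow_dvd_pow _ hbf) hdvdy' hY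
          ⟨t.2, htd2, htQ.2⟩
      by_cases hae : a < e
      · right; right
        refine ⟨e, he, hae, hdvdx', hdcx.1, ?_⟩
        exact Ico_nested hw0 (pow_dvd_pow _ hae.le) hX hdvdx' ⟨t.1, htQ.1, htd1⟩
      · push_neg at hae
        have hxd : Set.Ico d.1 (d.1 + (q1 : ℤ) ^ e) ⊆ Set.Ico X (X + (q1 : ℤ) ^ a) :=
          Ico_nested (pow_pos (by linarith) e) (pow_dvd_pow _ hae) hdvdx' hX
            ⟨t.1, htd1, htQ.1⟩
        left
        intro u hu
        have hu1 : u.1 ∈ Set.Ico d.1 (d.1 + (q1 : ℤ) ^ e) := by rw [← hdw]; exact hu.1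
        have hu2 : u.2 ∈ Set.Ico d.2.1 (d.2.1 + (q2 : ℤ) ^ f) := by rw [← hdh]; exact hu.2
        exact ⟨hxd hu1, hyd hu2⟩
  by_cases hB : ∃ d ∈ P, ∃ f : ℕ, f ≤ bmax ∧ b < f ∧ (q2 : ℤ) ^ f ∣ d.2.1 ∧
      Set.Ico d.2.1 (d.2.1 + (q2 : ℤ) ^ f) ⊆ Set.Ico c.2.1 (c.2.1 + c.2.2.2) ∧
      Set.Ico Y (Y + (q2 : ℤ) ^ b) ⊆ Set.Ico d.2.1 (d.2.1 + (q2 : ℤ) ^ f)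
  · obtain ⟨p, hpP, f, hf, hbf, hpdvd, hpyc, hysub⟩ := hB
    have hQ'c : Reg X p.2.1 ((q1 : ℤ) ^ a) ((q2 : ℤ) ^ f) ⊆ RegT c := by
      rw [Reg_def, RegT_def]
      exact Set.prod_mono hQcx.1 hpyc
    obtain ⟨d', hd'S, hd'⟩ := IH (amax - a + (bmax - f)) (by omega) a f ha hf le_rfl
      X p.2.1 hX hpdvd hQ'c
    refine hdone d' hd'S ?_
    refine Set.Subset.trans ?_ hd'
    rw [Reg_def, Reg_def]
    exact Set.prod_mono (subset_refl _) hysub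
  by_cases hC : ∃ d ∈ P, ∃ e : ℕ, e ≤ amax ∧ a < e ∧ (q1 : ℤ) ^ e ∣ d.1 ∧
      Set.Ico d.1 (d.1 + (q1 : ℤ) ^ e) ⊆ Set.Ico c.1 (c.1 + c.2.2.1) ∧
      Set.Ico X (X + (q1 : ℤ) ^ a) ⊆ Set.Ico d.1 (d.1 + (q1 : ℤ) ^ e)
  · obtain ⟨p, hpP, e, he, hae, hpdvd, hpxc, hxsub⟩ := hC
    have hQ'c : Reg p.1 Y ((q1 : ℤ) ^ e) ((q2 : ℤ) ^ b) ⊆ RegT c := by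
      rw [Reg_def, RegT_def]
      exact Set.prod_mono hpxc hQcx.2
    obtain ⟨d', hd'S, hd'⟩ := IH (amax - e + (bmax - b)) (by omega) e b he hb le_rfl
      p.1 Y hpdvd hY hQ'c
    refine hdone d' hd'S ?_
    refine Set.Subset.trans ?_ hd'
    rw [Reg_def, Reg_def]
    exact Set.prod_mono hxsub (subset_refl _)
  -- all pieces meeting Q are inside Q
  have hA : ∀ d ∈ P, RegT d ⊆ Reg X Y ((q1 : ℤ) ^ a) ((q2 : ℤ) ^ b) := by
    intro d hd
    rcases hclass d hd with h | h | h
    · exact h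
    · exact absurd ⟨d, hd, h⟩ hB
    · exact absurd ⟨d, hd, h⟩ hC
  obtain ⟨t0, ht0⟩ := hQne
  obtain ⟨d0, hd0P, _⟩ := hPcov t0 ht0
  by_cases hsing : ∀ d ∈ P, d = d0
  · refine hdone d0 hd0P.1 ?_
    intro u hu
    obtain ⟨d, hdP, hud⟩ := hPcov u hu
    rwa [hsing d hdP] at hud
  · push_neg at hsing
    obtain ⟨d1, hd1P, hne10⟩ := hsing
    set qc : ℤ × ℤ × ℤ × ℤ := (X, Y, (q1 : ℤ) ^ a, (q2 : ℤ) ^ b) with hqcdef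
    have hRqc : RegT qc = Reg X Y ((q1 : ℤ) ^ a) ((q2 : ℤ) ^ b) := rfl
    set T : Set (ℤ × ℤ × ℤ × ℤ) := insert qc (S \ P) with hTdef
    have hPsubS : P ⊆ S := fun d hd => hd.1
    have hPfin : P.Finite := hSfin.subset hPsubS
    have hnotP : ∀ d ∈ S, d ∉ P → RegT d ∩ Reg X Y ((q1 : ℤ) ^ a) ((q2 : ℤ) ^ b) = ∅ := by
      intro d hdS hdnP
      by_contra hcon
      exact hdnP ⟨hdS, Set.nonempty_iff_ne_empty.mpr hcon⟩
    have hT : GoodCut q1 q2 ((q1 : ℤ) ^ amax) ((q2 : ℤ) ^ bmax) c T := by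
      refine ⟨(hSfin.diff (t := P)).insert qc, ?_, ?_, ?_⟩
      · intro d hd
        rcases Set.mem_insert_iff.mp hd with rfl | hd'
        · exact ⟨a, b, rfl, rfl, hX, hY, pow_le_pow_right₀ hq1'.le ha, pow_le_pow_right₀ hq2'.le hb⟩
        · exact hSreg d hd'.1
      · intro d hd d' hd' hdd'
        rcases Set.mem_insert_iff.mp hd with rfl | hd1
        · rcases Set.mem_insert_iff.mp hd' with h | hd2
          · exact absurd h.symm hdd'
          · rw [hRqc, Set.inter_comm]
            exact hnotP d' hd2.1 hd2.2
        · rcases Set.mem_insert_iff.mp hd' with rfl | hd2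
          · rw [hRqc]
            exact hnotP d hd1.1 hd1.2
          · exact hSdisj d hd1.1 d' hd2.1 hdd'
      · apply subset_antisymm
        · intro t ht
          simp only [Set.mem_iUnion] at ht
          obtain ⟨d, hdT, htd⟩ := ht
          rcases Set.mem_insert_iff.mp hdT with rfl | hd'
          · exact hQc (hRqc ▸ htd)
          · rw [← hScov]
            exact Set.mem_biUnion hd'.1 htd
        · intro t ht
          rw [← hScov] at ht
          simp only [Set.mem_iUnion] at ht
          obtain ⟨d, hdS, htd⟩ := ht
          by_cases hdP : d ∈ P
          · exact Set.mem_biUnion (Set.mem_insert _ _) (hRqc ▸ (hA d hdP htd))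
          · exact Set.mem_biUnion (Set.mem_insert_of_mem _ ⟨hdS, hdP⟩) htd
    have hmin := hSmin T hT
    have h1 : T.ncard ≤ (S \ P).ncard + 1 := Set.ncard_insert_le _ _
    have h2 : (S \ P).ncard = S.ncard - P.ncard := Set.ncard_diff hPsubS hPfin
    have hpairsub : ({d1, d0} : Set (ℤ × ℤ × ℤ × ℤ)) ⊆ P := by
      intro z hz
      rcases hz with rfl | hz
      · exact hd1P
      · rw [hz]; exact hd0P
    have h3 : 2 ≤ P.ncard := by
      rw [← Set.ncard_pair hne10]
      exact Set.ncard_le_ncard hpairsub hPfin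
    have h4 : P.ncard ≤ S.ncard := Set.ncard_le_ncard hPsubS hSfin
    omega

/-- cutting every container by `σ(·,[wmax,hmax])`, where `wmax` and
`hmax` are the maximal block width and height, preserves solvability; moreover the
solutions of `(B, 𝒞)` and `(B, σ(𝒞,[wmax,hmax]))` coincide as assignments of
locations to blocks. -/
theorem stmt11 (q1 q2 : ℕ) (hq1 : 1 < q1) (hq2 : 1 < q2)
    (m : ℕ) (wB hB : Fin m → ℤ)
    (hBreg : ∀ i, ∃ a b : ℕ, wB i = (q1 : ℤ) ^ a ∧ hB i = (q2 : ℤ) ^ b)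
    (wmax hmax : ℤ)
    (hwmax : IsGreatest (Set.range wB) wmax)
    (hhmax : IsGreatest (Set.range hB) hmax)
    (𝒞 : Set (ℤ × ℤ × ℤ × ℤ))
    (h𝒞pos : ∀ c ∈ 𝒞, 0 < c.2.2.1 ∧ 0 < c.2.2.2)
    (h𝒞disj : ∀ c ∈ 𝒞, ∀ c' ∈ 𝒞, c ≠ c' → RegT c ∩ RegT c' = ∅)
    (cut : (ℤ × ℤ × ℤ × ℤ) → Set (ℤ × ℤ × ℤ × ℤ))
    (hcut : ∀ c ∈ 𝒞, SigmaCut q1 q2 wmax hmax c (cut c))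
    (𝒞σ : Set (ℤ × ℤ × ℤ × ℤ)) (h𝒞σ : 𝒞σ = ⋃ c ∈ 𝒞, cut c) :
    ((∃ x y, IsSolution m wB hB 𝒞 x y) ↔ (∃ x y, IsSolution m wB hB 𝒞σ x y)) ∧
    (∀ x y, IsSolution m wB hB 𝒞 x y ↔ IsSolution m wB hB 𝒞σ x y) := by
  have hq1' : (1 : ℤ) < (q1 : ℤ) := by exact_mod_cast hq1
  subst h𝒞σ
  obtain ⟨i0, hi0⟩ := hwmax.1
  obtain ⟨i1, hi1⟩ := hhmax.1
  obtain ⟨a0, b0', hwa0, _⟩ := hBreg i0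
  obtain ⟨a1', b1, _, hhb1⟩ := hBreg i1
  have hwmaxpow : wmax = (q1 : ℤ) ^ a0 := by rw [← hi0, hwa0]
  have hhmaxpow : hmax = (q2 : ℤ) ^ b1 := by rw [← hi1, hhb1]
  suffices h2 : ∀ x y, IsSolution m wB hB 𝒞 x y ↔
      IsSolution m wB hB (⋃ c ∈ 𝒞, cut c) x y by
    refine ⟨⟨fun ⟨x, y, h⟩ => ⟨x, y, (h2 x y).mp h⟩,
      fun ⟨x, y, h⟩ => ⟨x, y, (h2 x y).mpr h⟩⟩, h2⟩
  intro x y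
  constructor
  · rintro ⟨hdvd, hdisj, hin⟩
    refine ⟨hdvd, hdisj, ?_⟩
    intro i
    obtain ⟨c, hc, hsub⟩ := hin i
    obtain ⟨a, b, hwa, hhb⟩ := hBreg i
    have haa0 : a ≤ a0 := by
      have h := hwmax.2 (Set.mem_range_self i)
      rw [hwa, hwmaxpow] at h
      exact (pow_le_pow_iff_right₀ hq1').mp h
    have hbb1 : b ≤ b1 := by
      have h := hhmax.2 (Set.mem_range_self i)
      rw [hhb, hhmaxpow] at h
      exact (pow_le_pow_iff_right₀ (by exact_mod_cast hq2)).mp h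
    have hScut : SigmaCut q1 q2 ((q1 : ℤ) ^ a0) ((q2 : ℤ) ^ b1) c (cut c) := by
      rw [← hwmaxpow, ← hhmaxpow]; exact hcut c hc
    obtain ⟨d, hd, hsubd⟩ := key q1 q2 hq1 hq2 a0 b1 c (cut c) hScut
      (a0 - a + (b1 - b)) a b haa0 hbb1 le_rfl (x i) (y i)
      (by rw [← hwa]; exact (hdvd i).1) (by rw [← hhb]; exact (hdvd i).2)
      (by rw [← hwa, ← hhb]; exact hsub)
    refine ⟨d, Set.mem_biUnion hc hd, ?_⟩
    rw [hwa, hhb]; exact hsubd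
  · rintro ⟨hdvd, hdisj, hin⟩
    refine ⟨hdvd, hdisj, ?_⟩
    intro i
    obtain ⟨d, hd, hsub⟩ := hin i
    simp only [Set.mem_iUnion] at hd
    obtain ⟨c, hc, hdc⟩ := hd
    have hdsub : RegT d ⊆ RegT c := by
      rw [← (hcut c hc).1.2.2.2]
      exact Set.subset_biUnion_of_mem hdc
    exact ⟨c, hc, hsub.trans hdsub⟩
end

section
/- Greedy step correctness: Let B = {B1,...,Bm} be regular blocks sorted in descending order under the total order on sizes, and C a set of non-overlapping containers such that (B, C) has a solution. Let ŝ be the least size dominating all block sizes, let S be the containers in σ(C, ŝ) of size ⪰ Size(B1), and let C* be any size-minimal element of S. Then there is a solution in which B1 is placed at the lower-left corner of C*; equivalently, the residual problem (B \ {B1}, (C \ {C*}) ∪ pieces-of(C* \ B1(Loc(C*)))) also has a solution. -/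
/-- The strict total order on sizes: compare `max(w,h)`, then `w`, then `h`. -/
def sizeLT (s t : ℤ × ℤ) : Prop :=
  max s.1 s.2 < max t.1 t.2 ∨
  (max s.1 s.2 = max t.1 t.2 ∧ s.1 < t.1) ∨
  (max s.1 s.2 = max t.1 t.2 ∧ s.1 = t.1 ∧ s.2 < t.2)

/-- The corresponding total (non-strict) order on sizes. -/
def sizeLE (s t : ℤ × ℤ) : Prop := s = t ∨ sizeLT s t

lemma mem_Reg {x y w h : ℤ} {p : ℤ × ℤ} :
    p ∈ Reg x y w h ↔ (x ≤ p.1 ∧ p.1 < x + w) ∧ (y ≤ p.2 ∧ p.2 < y + h) := by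
  simp [Reg, Set.mem_prod, Set.mem_Ico]

lemma Reg_subset_iff {x y w h x' y' w' h' : ℤ} (hw : 0 < w) (hh : 0 < h) :
    Reg x y w h ⊆ Reg x' y' w' h' ↔
      x' ≤ x ∧ x + w ≤ x' + w' ∧ y' ≤ y ∧ y + h ≤ y' + h' := by
  constructor
  · intro hs
    have h1 := mem_Reg.1 (hs (show (x, y) ∈ Reg x y w h from mem_Reg.2 ⟨⟨le_refl _, by omega⟩, ⟨le_refl _, by omega⟩⟩))
    have h2 := mem_Reg.1 (hs (show (x + w - 1, y + h - 1) ∈ Reg x y w h from mem_Reg.2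
      ⟨⟨by omega, by omega⟩, ⟨by omega, by omega⟩⟩))
    simp only at h1 h2
    omega
  · intro ⟨h1, h2, h3, h4⟩ p hp
    rw [mem_Reg] at hp ⊢
    omega

lemma Reg_inter_nonempty_iff {x y w h x' y' w' h' : ℤ}
    (hw : 0 < w) (hh : 0 < h) (hw' : 0 < w') (hh' : 0 < h') :
    (Reg x y w h ∩ Reg x' y' w' h').Nonempty ↔
      (x < x' + w' ∧ x' < x + w) ∧ (y < y' + h' ∧ y' < y + h) := by
  constructor
  · rintro ⟨p, hp1, hp2⟩
    rw [mem_Reg] at hp1 hp2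
    omega
  · intro hov
    refine ⟨(max x x', max y y'), mem_Reg.2 ?_, mem_Reg.2 ?_⟩ <;>
      constructor <;> constructor <;> omega

lemma Reg_disjoint_iff {x y w h x' y' w' h' : ℤ}
    (hw : 0 < w) (hh : 0 < h) (hw' : 0 < w') (hh' : 0 < h') :
    Reg x y w h ∩ Reg x' y' w' h' = ∅ ↔
      x' + w' ≤ x ∨ x + w ≤ x' ∨ y' + h' ≤ y ∨ y + h ≤ y' := by
  rw [← Set.not_nonempty_iff_eq_empty, Reg_inter_nonempty_iff hw hh hw' hh']
  constructor <;> intro h5 <;> [skip; intro hc] <;> omega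

/-- Key alignment fact: if `d ∣ u - v` and `u < v + d` then `u ≤ v`. -/
lemma dvd_le_of_lt_add {d u v : ℤ} (hd : 0 < d) (hdvd : d ∣ u - v) (h : u < v + d) : u ≤ v := by
  by_contra hc
  push_neg at hc
  have : d ≤ u - v := Int.le_of_dvd (by omega) hdvd
  omega

/-- Aligned-interval nesting: two aligned power intervals that overlap are nested. -/
lemma aligned_nested {q : ℕ} {s t : ℕ} {u v : ℤ} (hq : 0 < q) (hst : s ≤ t)
    (hu : (q : ℤ) ^ s ∣ u) (hv : (q : ℤ) ^ t ∣ v)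
    (hov1 : v < u + (q : ℤ) ^ s) (hov2 : u < v + (q : ℤ) ^ t) :
    v ≤ u ∧ u + (q : ℤ) ^ s ≤ v + (q : ℤ) ^ t := by
  have hqs : (0 : ℤ) < (q : ℤ) ^ s := pow_pos (by exact_mod_cast hq) s
  have hdvd : ((q : ℤ) ^ s) ∣ (q : ℤ) ^ t := pow_dvd_pow _ hst
  constructor
  · exact dvd_le_of_lt_add hqs (dvd_sub (dvd_trans hdvd hv) hu) hov1
  · exact dvd_le_of_lt_add hqs (by have : (q:ℤ)^s ∣ v := dvd_trans hdvd hv; exact dvd_sub (dvd_add hu dvd_rfl) (dvd_add this hdvd)) (by omega)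

def istart (q : ℕ) (s : ℕ) (p : ℤ) : ℤ := p - p % (q : ℤ) ^ s

lemma istart_dvd (q s : ℕ) (p : ℤ) : (q : ℤ) ^ s ∣ istart q s p := by
  unfold istart
  rw [Int.emod_def]
  exact ⟨p / (q:ℤ)^s, by ring⟩

lemma istart_le {q : ℕ} (hq : 0 < q) (s : ℕ) (p : ℤ) :
    istart q s p ≤ p ∧ p < istart q s p + (q : ℤ) ^ s := by
  have hpos : (0:ℤ) < (q:ℤ)^s := pow_pos (by exact_mod_cast hq) s
  have h1 : 0 ≤ p % (q:ℤ)^s := Int.emod_nonneg p (by omega)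
  have h2 : p % (q:ℤ)^s < (q:ℤ)^s := Int.emod_lt_of_pos p hpos
  unfold istart; omega

lemma istart_eq {q : ℕ} (hq : 0 < q) {s : ℕ} {p v : ℤ}
    (hdvd : (q : ℤ) ^ s ∣ v) (h1 : v ≤ p) (h2 : p < v + (q : ℤ) ^ s) :
    istart q s p = v := by
  have hpos : (0:ℤ) < (q:ℤ)^s := pow_pos (by exact_mod_cast hq) s
  have hle := istart_le hq s p
  have hd2 := istart_dvd q s p
  have hdd : (q:ℤ)^s ∣ istart q s p - v := dvd_sub hd2 hdvd
  rcases hdd with ⟨k, hk⟩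
  have : k = 0 := by
    rcases lt_trichotomy k 0 with h | h | h
    · nlinarith [hle.1, hle.2]
    · exact h
    · nlinarith [hle.1, hle.2]
  rw [this, mul_zero] at hk
  omega

variable {q F : ℕ} {A B : ℤ}

/-- Exponent of the maximal aligned `q`-power interval `⊆ [A,B)` containing `p`. -/
def epart (q F : ℕ) (A B p : ℤ) : ℕ :=
  Nat.findGreatest (fun s => A ≤ istart q s p ∧ istart q s p + (q : ℤ) ^ s ≤ B) F

lemma epart_le : epart q F A B p ≤ F := Nat.findGreatest_le F

lemma epart_spec (hq : 0 < q) {p : ℤ} (h1 : A ≤ p) (h2 : p < B) :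
    A ≤ istart q (epart q F A B p) p ∧
      istart q (epart q F A B p) p + (q : ℤ) ^ (epart q F A B p) ≤ B := by
  unfold epart
  refine Nat.findGreatest_spec (P := fun s => A ≤ istart q s p ∧ istart q s p + (q:ℤ)^s ≤ B)
    (Nat.zero_le F) ?_
  have h0 : istart q 0 p = p :=
    istart_eq hq (s := 0) (p := p) (v := p) (by simp) le_rfl (by simp)
  simp only [h0, pow_zero]
  omega

lemma le_epart (hq : 0 < q) {s : ℕ} {p : ℤ} (hs : s ≤ F)
    (h1 : A ≤ istart q s p) (h2 : istart q s p + (q : ℤ) ^ s ≤ B) :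
    s ≤ epart q F A B p :=
  Nat.le_findGreatest hs ⟨h1, h2⟩

/-- Key maximality: any aligned power interval `[v, v+q^s) ⊆ [A,B)` containing `p`
is contained in the part of `p`. -/
lemma part_max (hq : 1 < q) {s : ℕ} {p v : ℤ} (hs : s ≤ F)
    (hdvd : (q : ℤ) ^ s ∣ v) (h1 : v ≤ p) (h2 : p < v + (q : ℤ) ^ s)
    (h3 : A ≤ v) (h4 : v + (q : ℤ) ^ s ≤ B) :
    istart q (epart q F A B p) p ≤ v ∧
      v + (q : ℤ) ^ s ≤ istart q (epart q F A B p) p + (q : ℤ) ^ (epart q F A B p) := by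
  have hq0 : 0 < q := by omega
  have hv : istart q s p = v := istart_eq hq0 hdvd h1 h2
  have hse : s ≤ epart q F A B p := le_epart hq0 hs (hv ▸ h3) (hv ▸ h4)
  have hle := istart_le hq0 (epart q F A B p) p
  exact aligned_nested hq0 hse hdvd (istart_dvd _ _ _)
    (by omega) (by omega)

/-- Parts are well-defined: points in the same part have the same part. -/
lemma part_eq (hq : 1 < q) {p p' : ℤ} (hA : A ≤ p) (hB : p < B)
    (h1 : istart q (epart q F A B p) p ≤ p')
    (h2 : p' < istart q (epart q F A B p) p + (q : ℤ) ^ (epart q F A B p)) :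
    epart q F A B p' = epart q F A B p ∧
      istart q (epart q F A B p') p' = istart q (epart q F A B p) p := by
  have hq0 : 0 < q := by omega
  have hsp := epart_spec (F := F) hq0 hA hB
  have hA' : A ≤ p' := le_trans hsp.1 h1
  have hB' : p' < B := lt_of_lt_of_le h2 hsp.2
  have hsub1 := part_max (A := A) (B := B) (p := p') hq (epart_le)
      (istart_dvd q (epart q F A B p) p) h1 h2 hsp.1 hsp.2
  have hsp' := epart_spec (F := F) hq0 hA' hB'
  have hmem := istart_le hq0 (epart q F A B p) p
  have hmem' := istart_le hq0 (epart q F A B p') p'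
  have hsub2 := part_max (A := A) (B := B) (p := p) hq (epart_le)
      (istart_dvd q (epart q F A B p') p') (by omega) (by omega) hsp'.1 hsp'.2
  have hveq : istart q (epart q F A B p') p' = istart q (epart q F A B p) p := by omega
  have hpow : (q:ℤ) ^ (epart q F A B p') = (q:ℤ) ^ (epart q F A B p) := by omega
  refine ⟨?_, hveq⟩
  have hmono : StrictMono (fun n : ℕ => (q:ℤ) ^ n) :=
    pow_right_strictMono₀ (by exact_mod_cast hq)
  exact hmono.injective hpow

/-- Transpose of a container/piece tuple. -/
def sw4 (c : ℤ × ℤ × ℤ × ℤ) : ℤ × ℤ × ℤ × ℤ := (c.2.1, c.1, c.2.2.2, c.2.2.1)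

lemma sw4_sw4 (c : ℤ × ℤ × ℤ × ℤ) : sw4 (sw4 c) = c := rfl

lemma sw4_injective : Function.Injective sw4 :=
  Function.LeftInverse.injective sw4_sw4

lemma Reg_swap (x y w h : ℤ) : Prod.swap '' Reg x y w h = Reg y x h w := by
  unfold Reg
  exact Set.image_swap_prod _ _

lemma RegT_sw4 (c : ℤ × ℤ × ℤ × ℤ) : RegT (sw4 c) = Prod.swap '' RegT c := by
  unfold RegT sw4
  rw [Reg_swap]

lemma swap_inter (A B : Set (ℤ × ℤ)) :
    Prod.swap '' (A ∩ B) = Prod.swap '' A ∩ Prod.swap '' B :=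
  Set.image_inter Prod.swap_injective

lemma swap_eq_empty {A : Set (ℤ × ℤ)} : Prod.swap '' A = ∅ ↔ A = ∅ := Set.image_eq_empty

lemma swap_subset {A B : Set (ℤ × ℤ)} : Prod.swap '' A ⊆ Prod.swap '' B ↔ A ⊆ B :=
  Set.image_subset_image_iff Prod.swap_injective

lemma GoodCut_sw4 {q1 q2 : ℕ} {W H : ℤ} {c : ℤ × ℤ × ℤ × ℤ} {S : Set (ℤ × ℤ × ℤ × ℤ)}
    (h : GoodCut q1 q2 W H c S) : GoodCut q2 q1 H W (sw4 c) (sw4 '' S) := by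
  obtain ⟨hfin, hreg, hdisj, huni⟩ := h
  refine ⟨hfin.image _, ?_, ?_, ?_⟩
  · rintro d ⟨e, he, rfl⟩
    obtain ⟨a, b, h1, h2, h3, h4, h5, h6⟩ := hreg e he
    exact ⟨b, a, h2, h1, h4, h3, h6, h5⟩
  · rintro d ⟨e, he, rfl⟩ d' ⟨e', he', rfl⟩ hne
    have : e ≠ e' := fun hc => hne (by rw [hc])
    rw [RegT_sw4, RegT_sw4, ← swap_inter, swap_eq_empty]
    exact hdisj e he e' he' this
  · rw [Set.biUnion_image]
    have : (⋃ e ∈ S, RegT (sw4 e)) = Prod.swap '' ⋃ e ∈ S, RegT e := by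
      rw [Set.image_iUnion₂]
      exact Set.iUnion₂_congr fun e he => RegT_sw4 e
    rw [this, huni, RegT_sw4]

lemma SigmaCut_sw4 {q1 q2 : ℕ} {W H : ℤ} {c : ℤ × ℤ × ℤ × ℤ} {S : Set (ℤ × ℤ × ℤ × ℤ)}
    (h : SigmaCut q1 q2 W H c S) : SigmaCut q2 q1 H W (sw4 c) (sw4 '' S) := by
  obtain ⟨hg, hmin⟩ := h
  refine ⟨GoodCut_sw4 hg, fun T hT => ?_⟩
  have hT' := GoodCut_sw4 hT
  rw [sw4_sw4] at hT'
  have h2 := hmin _ hT'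
  rw [Set.ncard_image_of_injective _ sw4_injective]
  rwa [Set.ncard_image_of_injective _ sw4_injective] at h2

lemma exp_le_of_pow_le {q : ℕ} (hq : 1 < q) {a b : ℕ}
    (h : (q : ℤ) ^ a ≤ (q : ℤ) ^ b) : a ≤ b := by
  have hmono : StrictMono (fun n : ℕ => (q:ℤ) ^ n) :=
    pow_right_strictMono₀ (by exact_mod_cast hq)
  exact hmono.le_iff_le.1 h

lemma RegT_eq (d : ℤ × ℤ × ℤ × ℤ) : RegT d = Reg d.1 d.2.1 d.2.2.1 d.2.2.2 := rfl

/-- Core band lemma: if no piece of a minimal cut contains the aligned block, and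
every piece meeting the block is horizontally contained in the block's span,
we reach a contradiction. -/
lemma keyL0 (q1 q2 : ℕ) (hq1 : 1 < q1) (hq2 : 1 < q2) (E F : ℕ)
    (c : ℤ × ℤ × ℤ × ℤ) (S : Set (ℤ × ℤ × ℤ × ℤ))
    (hS : SigmaCut q1 q2 ((q1:ℤ)^E) ((q2:ℤ)^F) c S)
    (X Y : ℤ) (α β : ℕ) (hα : α ≤ E) (hβ : β ≤ F)
    (hX : (q1:ℤ)^α ∣ X) (hY : (q2:ℤ)^β ∣ Y)
    (hsub : Reg X Y ((q1:ℤ)^α) ((q2:ℤ)^β) ⊆ RegT c)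
    (hnone : ∀ d ∈ S, ¬ (Reg X Y ((q1:ℤ)^α) ((q2:ℤ)^β) ⊆ RegT d))
    (hnarrow : ∀ d ∈ S, (RegT d ∩ Reg X Y ((q1:ℤ)^α) ((q2:ℤ)^β)).Nonempty →
        X ≤ d.1 ∧ d.1 + d.2.2.1 ≤ X + (q1:ℤ)^α) :
    False := by
  classical
  obtain ⟨⟨hfin, hreg, hdisj, huni⟩, hmin⟩ := hS
  have hq1Z : (1:ℤ) < (q1:ℤ) := by exact_mod_cast hq1
  have hq2Z : (1:ℤ) < (q2:ℤ) := by exact_mod_cast hq2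
  set wb : ℤ := (q1:ℤ)^α with hwb
  set hb : ℤ := (q2:ℤ)^β with hhb
  have hwb0 : 0 < wb := pow_pos (by omega) α
  have hhb0 : 0 < hb := pow_pos (by omega) β
  -- positivity of pieces
  have hP : ∀ d ∈ S, 0 < d.2.2.1 ∧ 0 < d.2.2.2 := by
    intro d hd
    obtain ⟨a, b, h1, h2, -⟩ := hreg d hd
    exact ⟨h1 ▸ pow_pos (by omega) a, h2 ▸ pow_pos (by omega) b⟩
  -- c dims positive
  have hcmem : (X, Y) ∈ RegT c := hsub (mem_Reg.2 ⟨⟨le_refl _, by omega⟩, ⟨le_refl _, by omega⟩⟩)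
  rw [RegT_eq, mem_Reg] at hcmem
  have hcw : 0 < c.2.2.1 := by omega
  have hch : 0 < c.2.2.2 := by omega
  have hsubc : c.1 ≤ X ∧ X + wb ≤ c.1 + c.2.2.1 ∧ c.2.1 ≤ Y ∧ Y + hb ≤ c.2.1 + c.2.2.2 := by
    exact (Reg_subset_iff hwb0 hhb0).1 hsub
  -- pieces are inside c
  have hco : ∀ d ∈ S, c.1 ≤ d.1 ∧ d.1 + d.2.2.1 ≤ c.1 + c.2.2.1 ∧
      c.2.1 ≤ d.2.1 ∧ d.2.1 + d.2.2.2 ≤ c.2.1 + c.2.2.2 := by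
    intro d hd
    have hsubd : RegT d ⊆ RegT c := by
      rw [← huni]; exact Set.subset_biUnion_of_mem hd
    exact (Reg_subset_iff (hP d hd).1 (hP d hd).2).1 hsubd
  -- wide pieces horizontally contain the strip
  have hwide : ∀ d ∈ S, (d.1 < X + wb ∧ X < d.1 + d.2.2.1) →
      ¬ (X ≤ d.1 ∧ d.1 + d.2.2.1 ≤ X + wb) →
      d.1 ≤ X ∧ X + wb ≤ d.1 + d.2.2.1 := by
    intro d hd hov hnn
    obtain ⟨a, b, h1, h2, h3, h4, -⟩ := hreg d hd
    rcases Nat.le_total a α with hle | hle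
    · exfalso; apply hnn
      have hh := aligned_nested (u := d.1) (v := X) (by omega : 0 < q1) hle (h1 ▸ h3) hX
        (by omega) (by omega)
      omega
    · have hh := aligned_nested (u := X) (v := d.1) (by omega : 0 < q1) hle hX (h1 ▸ h3)
        (by omega) (by omega)
      omega
  set Sfin := hfin.toFinset with hSfin
  set lowF := Sfin.filter (fun d => ((d.1 < X + wb ∧ X < d.1 + d.2.2.1) ∧
      ¬ (X ≤ d.1 ∧ d.1 + d.2.2.1 ≤ X + wb)) ∧ d.2.1 + d.2.2.2 ≤ Y) with hlowF
  set highF := Sfin.filter (fun d => ((d.1 < X + wb ∧ X < d.1 + d.2.2.1) ∧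
      ¬ (X ≤ d.1 ∧ d.1 + d.2.2.1 ≤ X + wb)) ∧ Y + hb ≤ d.2.1) with hhighF
  set AF := insert c.2.1 (lowF.image (fun d => d.2.1 + d.2.2.2)) with hAF
  set BF := insert (c.2.1 + c.2.2.2) (highF.image (fun d => d.2.1)) with hBF
  set A := AF.max' ⟨c.2.1, Finset.mem_insert_self _ _⟩ with hA
  set B := BF.min' ⟨c.2.1 + c.2.2.2, Finset.mem_insert_self _ _⟩ with hB
  have hAY : A ≤ Y := by
    apply Finset.max'_le
    intro v hv
    rcases Finset.mem_insert.1 hv with rfl | hv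
    · exact hsubc.2.2.1
    · obtain ⟨d, hd, rfl⟩ := Finset.mem_image.1 hv
      exact (Finset.mem_filter.1 hd).2.2
  have hYB : Y + hb ≤ B := by
    apply Finset.le_min'
    intro v hv
    rcases Finset.mem_insert.1 hv with rfl | hv
    · exact hsubc.2.2.2
    · obtain ⟨d, hd, rfl⟩ := Finset.mem_image.1 hv
      exact (Finset.mem_filter.1 hd).2.2
  have hAc : c.2.1 ≤ A := Finset.le_max' _ _ (Finset.mem_insert_self _ _)
  have hBc : B ≤ c.2.1 + c.2.2.2 := Finset.min'_le _ _ (Finset.mem_insert_self _ _)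
  have hAB : A < B := by omega
  -- wide pieces avoid the band [A, B)
  have havoid : ∀ d ∈ S, (d.1 < X + wb ∧ X < d.1 + d.2.2.1) →
      ¬ (X ≤ d.1 ∧ d.1 + d.2.2.1 ≤ X + wb) →
      d.2.1 + d.2.2.2 ≤ A ∨ B ≤ d.2.1 := by
    intro d hd hov hnn
    have hydisj : d.2.1 + d.2.2.2 ≤ Y ∨ Y + hb ≤ d.2.1 := by
      by_contra hcon
      push_neg at hcon
      have hne : (RegT d ∩ Reg X Y wb hb).Nonempty := by
        rw [RegT_eq]
        exact (Reg_inter_nonempty_iff (hP d hd).1 (hP d hd).2 hwb0 hhb0).2 (by omega)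
      exact hnn (hnarrow d hd hne)
    rcases hydisj with h | h
    · left
      apply Finset.le_max'
      apply Finset.mem_insert_of_mem
      apply Finset.mem_image.2
      refine ⟨d, Finset.mem_filter.2 ⟨hSfin ▸ hfin.mem_toFinset.2 hd, ⟨hov, hnn⟩, h⟩, rfl⟩
    · right
      apply Finset.min'_le
      apply Finset.mem_insert_of_mem
      apply Finset.mem_image.2
      refine ⟨d, Finset.mem_filter.2 ⟨hSfin ▸ hfin.mem_toFinset.2 hd, ⟨hov, hnn⟩, h⟩, rfl⟩
  -- every piece meeting the band rectangle is contained in it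
  have hmeetsR : ∀ d ∈ S, (RegT d ∩ Reg X A wb (B - A)).Nonempty → RegT d ⊆ Reg X A wb (B - A) := by
    intro d hd hne
    have hdp := hP d hd
    have hBA : (0:ℤ) < B - A := by omega
    have hov := (Reg_inter_nonempty_iff hdp.1 hdp.2 hwb0 hBA).1 (by
      rw [RegT_eq] at hne; exact hne)
    have hxov : d.1 < X + wb ∧ X < d.1 + d.2.2.1 := ⟨hov.1.1, hov.1.2⟩
    have hyov : d.2.1 < A + (B - A) ∧ A < d.2.1 + d.2.2.2 := ⟨hov.2.1, hov.2.2⟩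
    have hxn : X ≤ d.1 ∧ d.1 + d.2.2.1 ≤ X + wb := by
      by_contra hnn
      rcases havoid d hd hxov hnn with h | h <;> omega
    have hyn : A ≤ d.2.1 ∧ d.2.1 + d.2.2.2 ≤ B := by
      constructor
      · by_contra hlow
        push_neg at hlow
        have hmem : A ∈ AF := Finset.max'_mem _ _
        rcases Finset.mem_insert.1 hmem with hA0 | hmem
        · have := (hco d hd).2.2.1; omega
        · obtain ⟨w1, hw1, hw1top⟩ := Finset.mem_image.1 hmem
          rw [Finset.mem_filter] at hw1
          obtain ⟨hw1S, ⟨hw1ov, hw1nn⟩, hw1le⟩ := hw1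
          have hw1S' : w1 ∈ S := hfin.mem_toFinset.1 (hSfin ▸ hw1S)
          have hw1p := hP w1 hw1S'
          have hw1wide := hwide w1 hw1S' hw1ov hw1nn
          have hne2 : (RegT d ∩ RegT w1).Nonempty := by
            rw [RegT_eq, RegT_eq]
            exact (Reg_inter_nonempty_iff hdp.1 hdp.2 hw1p.1 hw1p.2).2 (by omega)
          have hdne : d ≠ w1 := by
            intro hcon; rw [hcon] at hxn; exact hw1nn hxn
          rw [hdisj d hd w1 hw1S' hdne] at hne2
          exact Set.not_nonempty_empty hne2
      · by_contra hhigh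
        push_neg at hhigh
        have hmem : B ∈ BF := Finset.min'_mem _ _
        rcases Finset.mem_insert.1 hmem with hB0 | hmem
        · have := (hco d hd).2.2.2; omega
        · obtain ⟨w2, hw2, hw2bot⟩ := Finset.mem_image.1 hmem
          rw [Finset.mem_filter] at hw2
          obtain ⟨hw2S, ⟨hw2ov, hw2nn⟩, hw2le⟩ := hw2
          have hw2S' : w2 ∈ S := hfin.mem_toFinset.1 (hSfin ▸ hw2S)
          have hw2p := hP w2 hw2S'
          have hw2wide := hwide w2 hw2S' hw2ov hw2nn
          have hne2 : (RegT d ∩ RegT w2).Nonempty := by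
            rw [RegT_eq, RegT_eq]
            exact (Reg_inter_nonempty_iff hdp.1 hdp.2 hw2p.1 hw2p.2).2 (by omega)
          have hdne : d ≠ w2 := by
            intro hcon; rw [hcon] at hxn; exact hw2nn hxn
          rw [hdisj d hd w2 hw2S' hdne] at hne2
          exact Set.not_nonempty_empty hne2
    rw [RegT_eq, Reg_subset_iff hdp.1 hdp.2]
    omega
  -- the block lies in the band rectangle
  have hblkR : Reg X Y wb hb ⊆ Reg X A wb (B - A) := by
    rw [Reg_subset_iff hwb0 hhb0]; omega
  have hq20 : 0 < q2 := by omega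
  -- pieces contained in the band have y-interval inside the part of any of their rows
  have hNpart : ∀ d ∈ S, RegT d ⊆ Reg X A wb (B - A) →
      ∀ p : ℤ, d.2.1 ≤ p → p < d.2.1 + d.2.2.2 →
      epart q2 F A B p = epart q2 F A B d.2.1 ∧
      istart q2 (epart q2 F A B p) p = istart q2 (epart q2 F A B d.2.1) d.2.1 := by
    intro d hd hsubR p hp1 hp2
    obtain ⟨a, b, h1, h2, h3, h4, h5, h6⟩ := hreg d hd
    have hdp := hP d hd
    have hcoR := (Reg_subset_iff hdp.1 hdp.2).1 hsubR
    have hbF : b ≤ F := exp_le_of_pow_le hq2 (h2 ▸ h6)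
    have hmax := part_max (A := A) (B := B) (p := d.2.1) hq2 hbF (h2 ▸ h4) le_rfl
        (by omega) (by omega) (by omega)
    exact part_eq hq2 (by omega) (by omega) (by omega) (by omega)
  -- the block's y-interval is inside the part of Y
  have hblkpart := part_max (A := A) (B := B) (p := Y) hq2 hβ hY le_rfl
      (by omega) (by omega) (by omega)
  set stk : ℤ → ℤ × ℤ × ℤ × ℤ :=
    fun p => (X, istart q2 (epart q2 F A B p) p, wb, (q2:ℤ)^(epart q2 F A B p)) with hstk
  have hstkRegT : ∀ p, RegT (stk p) =
      Reg X (istart q2 (epart q2 F A B p) p) wb ((q2:ℤ)^(epart q2 F A B p)) := fun p => rfl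
  set Stack : Set (ℤ × ℤ × ℤ × ℤ) := stk '' Set.Ico A B with hStack
  set N : Set (ℤ × ℤ × ℤ × ℤ) := {d ∈ S | RegT d ⊆ Reg X A wb (B - A)} with hNdef
  have hNsub : N ⊆ S := fun d hd => hd.1
  have hNfin : N.Finite := hfin.subset hNsub
  have hRsetC : Reg X A wb (B - A) ⊆ RegT c := by
    rw [RegT_eq, Reg_subset_iff hwb0 (by omega : (0:ℤ) < B - A)]
    omega
  have hcov : ∀ p ∈ Reg X A wb (B - A), ∃ d ∈ N, p ∈ RegT d := by
    intro p hp
    have hpc : p ∈ RegT c := hRsetC hp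
    rw [← huni] at hpc
    obtain ⟨d, hd, hpd⟩ := Set.mem_iUnion₂.1 hpc
    exact ⟨d, ⟨hd, hmeetsR d hd ⟨p, hpd, hp⟩⟩, hpd⟩
  have hNco : ∀ d ∈ N, X ≤ d.1 ∧ d.1 + d.2.2.1 ≤ X + wb ∧ A ≤ d.2.1 ∧ d.2.1 + d.2.2.2 ≤ B := by
    intro d hd
    have hdp := hP d (hNsub hd)
    have := (Reg_subset_iff hdp.1 hdp.2).1 hd.2
    omega
  have himage : (fun d => stk d.2.1) '' N = Stack := by
    apply Set.Subset.antisymm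
    · rintro v ⟨d, hdN, rfl⟩
      have hdco := hNco d hdN
      have hdp := hP d (hNsub hdN)
      exact ⟨d.2.1, Set.mem_Ico.2 ⟨hdco.2.2.1, by omega⟩, rfl⟩
    · rintro v ⟨p, hp, rfl⟩
      rw [Set.mem_Ico] at hp
      have hpt : ((X, p) : ℤ × ℤ) ∈ Reg X A wb (B - A) :=
        mem_Reg.2 ⟨⟨le_refl _, by omega⟩, ⟨by omega, by omega⟩⟩
      obtain ⟨d, hdN, hmem⟩ := hcov (X, p) hpt
      rw [RegT_eq, mem_Reg] at hmem
      have hpeq := hNpart d (hNsub hdN) hdN.2 p (by exact hmem.2.1) (by exact hmem.2.2)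
      refine ⟨d, hdN, ?_⟩
      show stk d.2.1 = stk p
      have : stk p = stk d.2.1 := by
        simp only [hstk]
        rw [hpeq.2, hpeq.1]
      exact this.symm
  -- two distinct pieces of N meeting the block
  have hcorner : ((X, Y) : ℤ × ℤ) ∈ Reg X Y wb hb :=
    mem_Reg.2 ⟨⟨le_refl _, by omega⟩, ⟨le_refl _, by omega⟩⟩
  obtain ⟨d1, hd1N, hd1mem⟩ := hcov (X, Y) (hblkR hcorner)
  obtain ⟨pt, hptblk, hptnot⟩ := Set.not_subset.1 (hnone d1 (hNsub hd1N))
  obtain ⟨d2, hd2N, hd2mem⟩ := hcov pt (hblkR hptblk)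
  have hne12 : d1 ≠ d2 := fun h => hptnot (h ▸ hd2mem)
  have hsame : ∀ d ∈ N, ∀ r : ℤ × ℤ, r ∈ RegT d → r ∈ Reg X Y wb hb →
      stk d.2.1 = stk Y := by
    intro d hdN r hrd hrb
    rw [RegT_eq, mem_Reg] at hrd
    rw [mem_Reg] at hrb
    have h1 := hNpart d (hNsub hdN) hdN.2 r.2 hrd.2.1 hrd.2.2
    have h2 := part_eq (q := q2) (F := F) (A := A) (B := B) (p := Y) (p' := r.2) hq2 hAY (by omega)
      (by omega) (by omega)
    show stk d.2.1 = stk Y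
    simp only [hstk]
    rw [← h1.2, ← h1.1, h2.2, h2.1]
  have hψ12 : stk d1.2.1 = stk d2.2.1 := by
    rw [hsame d1 hd1N (X, Y) hd1mem hcorner, hsame d2 hd2N pt hd2mem hptblk]
  -- counting
  have hStackFin : Stack.Finite := (Set.finite_Ico A B).image _
  have himgle : Stack.ncard + 1 ≤ N.ncard := by
    have heq : (fun d => stk d.2.1) '' (N \ {d1}) = Stack := by
      rw [← himage]
      apply Set.Subset.antisymm (Set.image_mono Set.diff_subset)
      rintro v ⟨d, hdN, rfl⟩
      by_cases hd : d = d1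
      · refine ⟨d2, ⟨hd2N, fun hmem => hne12 (Set.mem_singleton_iff.1 hmem).symm⟩, ?_⟩
        subst hd
        exact hψ12.symm
      · exact ⟨d, ⟨hdN, hd⟩, rfl⟩
    have hc1 : Stack.ncard ≤ (N \ {d1}).ncard := by
      rw [← heq]
      exact Set.ncard_image_le hNfin.diff
    have hc2 : (N \ {d1}).ncard = N.ncard - 1 := Set.ncard_diff_singleton_of_mem hd1N
    have hc3 : 0 < N.ncard := (Set.ncard_pos hNfin).2 ⟨d1, hd1N⟩
    omega
  -- the modified cut
  have hSN_disj : ∀ d ∈ S, d ∉ N → RegT d ∩ Reg X A wb (B - A) = ∅ := by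
    intro d hd hdn
    by_contra hcon
    exact hdn ⟨hd, hmeetsR d hd (Set.nonempty_iff_ne_empty.2 hcon)⟩
  have hgood : GoodCut q1 q2 ((q1:ℤ)^E) ((q2:ℤ)^F) c ((S \ N) ∪ Stack) := by
    refine ⟨hfin.diff.union hStackFin, ?_, ?_, ?_⟩
    · rintro d (hd | ⟨p, hp, rfl⟩)
      · exact hreg d hd.1
      · rw [Set.mem_Ico] at hp
        refine ⟨α, epart q2 F A B p, hwb, rfl, hX, istart_dvd _ _ _, ?_, ?_⟩
        · show wb ≤ (q1:ℤ)^E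
          rw [hwb]
          exact pow_le_pow_right₀ (by exact_mod_cast hq1.le) hα
        · show (q2:ℤ)^(epart q2 F A B p) ≤ (q2:ℤ)^F
          exact pow_le_pow_right₀ (by exact_mod_cast hq2.le) epart_le
    · have hstk_sub : ∀ p ∈ Set.Ico A B, RegT (stk p) ⊆ Reg X A wb (B - A) := by
        intro p hp
        rw [Set.mem_Ico] at hp
        have hsp := epart_spec (F := F) hq20 hp.1 hp.2
        rw [hstkRegT, Reg_subset_iff hwb0 (pow_pos (show (0:ℤ) < (q2:ℤ) by exact_mod_cast hq20) _)]
        omega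
      have hstack_disj : ∀ p ∈ Set.Ico A B, ∀ p' ∈ Set.Ico A B, stk p ≠ stk p' →
          RegT (stk p) ∩ RegT (stk p') = ∅ := by
        intro p hp p' hp' hne
        rw [Set.mem_Ico] at hp hp'
        by_contra hcon
        obtain ⟨r, hr1, hr2⟩ := Set.nonempty_iff_ne_empty.2 hcon
        rw [hstkRegT, mem_Reg] at hr1 hr2
        have he1 := part_eq (q := q2) (F := F) (p := p) (p' := r.2) hq2 hp.1 hp.2 hr1.2.1 hr1.2.2
        have he2 := part_eq (q := q2) (F := F) (p := p') (p' := r.2) hq2 hp'.1 hp'.2 hr2.2.1 hr2.2.2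
        apply hne
        show stk p = stk p'
        simp only [hstk]
        rw [← he1.2, ← he1.1, ← he2.2, ← he2.1]
      rintro d (hd | ⟨p, hp, rfl⟩) d' (hd' | ⟨p', hp', rfl⟩) hne
      · exact hdisj d hd.1 d' hd'.1 (hne)
      · apply Set.eq_empty_of_subset_empty
        calc RegT d ∩ RegT (stk p') ⊆ RegT d ∩ Reg X A wb (B - A) :=
              Set.inter_subset_inter_right _ (hstk_sub p' hp')
          _ = ∅ := hSN_disj d hd.1 hd.2
      · apply Set.eq_empty_of_subset_empty
        rw [Set.inter_comm]
        calc RegT d' ∩ RegT (stk p) ⊆ RegT d' ∩ Reg X A wb (B - A) :=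
              Set.inter_subset_inter_right _ (hstk_sub p hp)
          _ = ∅ := hSN_disj d' hd'.1 hd'.2
      · exact hstack_disj p hp p' hp' hne
    · apply Set.Subset.antisymm
      · rintro r hr
        obtain ⟨d, hd, hrd⟩ := Set.mem_iUnion₂.1 hr
        rcases hd with hd | ⟨p, hp, rfl⟩
        · rw [← huni]
          exact Set.mem_biUnion hd.1 hrd
        · apply hRsetC
          rw [Set.mem_Ico] at hp
          have hsp := epart_spec (F := F) hq20 hp.1 hp.2
          rw [hstkRegT, mem_Reg] at hrd
          rw [mem_Reg]
          constructor
          · exact ⟨hrd.1.1, by omega⟩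
          · constructor <;> omega
      · intro r hr
        rw [← huni] at hr
        obtain ⟨d, hd, hrd⟩ := Set.mem_iUnion₂.1 hr
        apply Set.mem_iUnion₂.2
        by_cases hdN : d ∈ N
        · have hrR := hdN.2 hrd
          rw [mem_Reg] at hrR
          refine ⟨stk r.2, Set.mem_union_right _ ⟨r.2, Set.mem_Ico.2 ⟨hrR.2.1, by omega⟩, rfl⟩, ?_⟩
          have hil := istart_le hq20 (epart q2 F A B r.2) r.2
          rw [hstkRegT, mem_Reg]
          exact ⟨⟨hrR.1.1, hrR.1.2⟩, ⟨hil.1, hil.2⟩⟩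
        · exact ⟨d, Set.mem_union_left _ ⟨hd, hdN⟩, hrd⟩
  -- contradiction with minimality
  have hge := hmin _ hgood
  have hle2 : ((S \ N) ∪ Stack).ncard ≤ (S \ N).ncard + Stack.ncard := Set.ncard_union_le _ _
  have hdiffcard : (S \ N).ncard = S.ncard - N.ncard := Set.ncard_diff hNsub hNfin
  have hNle : N.ncard ≤ S.ncard := Set.ncard_le_ncard hNsub hfin
  omega

/-- Key lemma: in a minimal cut, every aligned block (of size within the cut bound)
contained in the container is contained in a single piece. -/
lemma keyL (q1 q2 : ℕ) (hq1 : 1 < q1) (hq2 : 1 < q2) (E F : ℕ)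
    (c : ℤ × ℤ × ℤ × ℤ) (S : Set (ℤ × ℤ × ℤ × ℤ))
    (hS : SigmaCut q1 q2 ((q1:ℤ)^E) ((q2:ℤ)^F) c S)
    (X Y : ℤ) (α β : ℕ) (hα : α ≤ E) (hβ : β ≤ F)
    (hX : (q1:ℤ)^α ∣ X) (hY : (q2:ℤ)^β ∣ Y)
    (hsub : Reg X Y ((q1:ℤ)^α) ((q2:ℤ)^β) ⊆ RegT c) :
    ∃ d ∈ S, Reg X Y ((q1:ℤ)^α) ((q2:ℤ)^β) ⊆ RegT d := by
  by_contra hcon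
  push_neg at hcon
  have hreg := hS.1.2.1
  have hdisj := hS.1.2.2.1
  set wb : ℤ := (q1:ℤ)^α with hwb
  set hb : ℤ := (q2:ℤ)^β with hhb
  have hwb0 : 0 < wb := pow_pos (by positivity) α
  have hhb0 : 0 < hb := pow_pos (by positivity) β
  have hP : ∀ d ∈ S, 0 < d.2.2.1 ∧ 0 < d.2.2.2 := by
    intro d hd
    obtain ⟨a, b, h1, h2, -⟩ := hreg d hd
    exact ⟨h1 ▸ pow_pos (by positivity) a, h2 ▸ pow_pos (by positivity) b⟩
  -- dichotomies for pieces meeting the block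
  have hxd : ∀ d ∈ S, (RegT d ∩ Reg X Y wb hb).Nonempty →
      (X ≤ d.1 ∧ d.1 + d.2.2.1 ≤ X + wb) ∨ (d.1 ≤ X ∧ X + wb ≤ d.1 + d.2.2.1) := by
    intro d hd hne
    obtain ⟨a, b, h1, h2, h3, h4, -⟩ := hreg d hd
    have hov := (Reg_inter_nonempty_iff (hP d hd).1 (hP d hd).2 hwb0 hhb0).1 hne
    rcases Nat.le_total a α with hle | hle
    · left
      have hh := aligned_nested (u := d.1) (v := X) (by omega : 0 < q1) hle (h1 ▸ h3) hX
        (by omega) (by omega)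
      omega
    · right
      have hh := aligned_nested (u := X) (v := d.1) (by omega : 0 < q1) hle hX (h1 ▸ h3)
        (by omega) (by omega)
      omega
  have hyd : ∀ d ∈ S, (RegT d ∩ Reg X Y wb hb).Nonempty →
      (Y ≤ d.2.1 ∧ d.2.1 + d.2.2.2 ≤ Y + hb) ∨ (d.2.1 ≤ Y ∧ Y + hb ≤ d.2.1 + d.2.2.2) := by
    intro d hd hne
    obtain ⟨a, b, h1, h2, h3, h4, -⟩ := hreg d hd
    have hov := (Reg_inter_nonempty_iff (hP d hd).1 (hP d hd).2 hwb0 hhb0).1 hne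
    rcases Nat.le_total b β with hle | hle
    · left
      have hh := aligned_nested (u := d.2.1) (v := Y) (by omega : 0 < q2) hle (h2 ▸ h4) hY
        (by omega) (by omega)
      omega
    · right
      have hh := aligned_nested (u := Y) (v := d.2.1) (by omega : 0 < q2) hle hY (h2 ▸ h4)
        (by omega) (by omega)
      omega
  have hnotwide : ∀ d ∈ S, ¬ ((d.1 ≤ X ∧ X + wb ≤ d.1 + d.2.2.1) ∧
      (d.2.1 ≤ Y ∧ Y + hb ≤ d.2.1 + d.2.2.2)) := by
    intro d hd hcc
    apply hcon d hd
    rw [RegT_eq, Reg_subset_iff hwb0 hhb0]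
    omega
  by_cases hall : ∀ d ∈ S, (RegT d ∩ Reg X Y wb hb).Nonempty →
      (X ≤ d.1 ∧ d.1 + d.2.2.1 ≤ X + wb)
  · exact keyL0 q1 q2 hq1 hq2 E F c S hS X Y α β hα hβ hX hY hsub hcon hall
  · push_neg at hall
    obtain ⟨d1, hd1S, hd1ne, hd1nn⟩ := hall
    have hd1w : d1.1 ≤ X ∧ X + wb ≤ d1.1 + d1.2.2.1 := by
      rcases hxd d1 hd1S hd1ne with h | h
      · exact absurd (hd1nn h.1) (by omega)
      · exact h
    have hd1yn : Y ≤ d1.2.1 ∧ d1.2.1 + d1.2.2.2 ≤ Y + hb := by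
      rcases hyd d1 hd1S hd1ne with h | h
      · exact h
      · exact absurd ⟨hd1w, h⟩ (hnotwide d1 hd1S)
    -- every piece meeting the block is vertically inside it
    have hally : ∀ d ∈ S, (RegT d ∩ Reg X Y wb hb).Nonempty →
        (Y ≤ d.2.1 ∧ d.2.1 + d.2.2.2 ≤ Y + hb) := by
      intro d hd hne
      rcases hyd d hd hne with h | h
      · exact h
      · exfalso
        have hdxn : X ≤ d.1 ∧ d.1 + d.2.2.1 ≤ X + wb := by
          rcases hxd d hd hne with h' | h'
          · exact h'
          · exact absurd ⟨h', h⟩ (hnotwide d hd)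
        have hdne1 : d ≠ d1 := by
          intro hcc
          rw [hcc] at hdxn
          exact absurd (hd1nn hdxn.1) (by omega)
        have hint : (RegT d ∩ RegT d1).Nonempty := by
          rw [RegT_eq, RegT_eq]
          apply (Reg_inter_nonempty_iff (hP d hd).1 (hP d hd).2 (hP d1 hd1S).1 (hP d1 hd1S).2).2
          have h1 := (hP d hd).1
          have h2 := (hP d1 hd1S).2
          omega
        rw [hdisj d hd d1 hd1S hdne1] at hint
        exact Set.not_nonempty_empty hint
    -- transpose and apply keyL0
    apply keyL0 q2 q1 hq2 hq1 F E (sw4 c) (sw4 '' S) (SigmaCut_sw4 hS) Y X β α hβ hα hY hX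
    · rw [RegT_sw4, ← Reg_swap]
      exact Set.image_mono hsub
    · rintro d' ⟨d, hd, rfl⟩ hsubd
      apply hcon d hd
      rw [RegT_sw4, ← Reg_swap] at hsubd
      exact swap_subset.1 hsubd
    · rintro d' ⟨d, hd, rfl⟩ hne
      have hne' : (RegT d ∩ Reg X Y wb hb).Nonempty := by
        rw [RegT_sw4, ← Reg_swap, ← swap_inter, Set.image_nonempty] at hne
        exact hne
      have := hally d hd hne'
      show Y ≤ d.2.1 ∧ d.2.1 + d.2.2.2 ≤ Y + (q2:ℤ)^β
      omega

open scoped Classical in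
/-- Exchanging the contents of two congruent, disjoint aligned boxes preserves solutions. -/
lemma swap_sol (m : ℕ) (wB hB : Fin m → ℤ) (𝒟 : Set (ℤ × ℤ × ℤ × ℤ)) (x y : Fin m → ℤ)
    (hpos : ∀ i, 0 < wB i ∧ 0 < hB i)
    (hsol : IsSolution m wB hB 𝒟 x y)
    (x1 y1 x2 y2 W H : ℤ) (hW : 0 < W) (hH : 0 < H)
    (hdisjR : Reg x1 y1 W H ∩ Reg x2 y2 W H = ∅)
    (hd1 : ∃ d ∈ 𝒟, Reg x1 y1 W H ⊆ RegT d)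
    (hd2 : ∃ d ∈ 𝒟, Reg x2 y2 W H ⊆ RegT d)
    (hdvd : ∀ i, (Reg (x i) (y i) (wB i) (hB i) ⊆ Reg x1 y1 W H ∨
                  Reg (x i) (y i) (wB i) (hB i) ⊆ Reg x2 y2 W H) →
        wB i ∣ (x2 - x1) ∧ hB i ∣ (y2 - y1))
    (hsep : ∀ i, Reg (x i) (y i) (wB i) (hB i) ⊆ Reg x1 y1 W H ∨
        Reg (x i) (y i) (wB i) (hB i) ⊆ Reg x2 y2 W H ∨
        Reg (x i) (y i) (wB i) (hB i) ∩ (Reg x1 y1 W H ∪ Reg x2 y2 W H) = ∅) :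
    IsSolution m wB hB 𝒟
      (fun i => if Reg (x i) (y i) (wB i) (hB i) ⊆ Reg x1 y1 W H then x i + (x2 - x1)
                else if Reg (x i) (y i) (wB i) (hB i) ⊆ Reg x2 y2 W H then x i - (x2 - x1)
                else x i)
      (fun i => if Reg (x i) (y i) (wB i) (hB i) ⊆ Reg x1 y1 W H then y i + (y2 - y1)
                else if Reg (x i) (y i) (wB i) (hB i) ⊆ Reg x2 y2 W H then y i - (y2 - y1)
                else y i) := by
  obtain ⟨hal, hdis, hcont⟩ := hsol
  have hdisjR' : Reg x2 y2 W H ∩ Reg x1 y1 W H = ∅ := by rw [Set.inter_comm]; exact hdisjR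
  -- new region in branch A is inside R2, in branch B inside R1
  have hA2 : ∀ i, Reg (x i) (y i) (wB i) (hB i) ⊆ Reg x1 y1 W H →
      Reg (x i + (x2 - x1)) (y i + (y2 - y1)) (wB i) (hB i) ⊆ Reg x2 y2 W H := by
    intro i h
    have hc := (Reg_subset_iff (hpos i).1 (hpos i).2).1 h
    rw [Reg_subset_iff (hpos i).1 (hpos i).2]
    omega
  have hB1 : ∀ i, Reg (x i) (y i) (wB i) (hB i) ⊆ Reg x2 y2 W H →
      Reg (x i - (x2 - x1)) (y i - (y2 - y1)) (wB i) (hB i) ⊆ Reg x1 y1 W H := by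
    intro i h
    have hc := (Reg_subset_iff (hpos i).1 (hpos i).2).1 h
    rw [Reg_subset_iff (hpos i).1 (hpos i).2]
    omega
  -- branch disambiguation
  have hnotboth : ∀ i, Reg (x i) (y i) (wB i) (hB i) ⊆ Reg x1 y1 W H →
      Reg (x i) (y i) (wB i) (hB i) ⊆ Reg x2 y2 W H → False := by
    intro i h1 h2
    have : (Reg (x i) (y i) (wB i) (hB i)).Nonempty := Reg_nonempty (hpos i).1 (hpos i).2
    obtain ⟨p, hp⟩ := this
    have : p ∈ Reg x1 y1 W H ∩ Reg x2 y2 W H := ⟨h1 hp, h2 hp⟩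
    rw [hdisjR] at this
    exact this
  have hCdis : ∀ i, ¬ Reg (x i) (y i) (wB i) (hB i) ⊆ Reg x1 y1 W H →
      ¬ Reg (x i) (y i) (wB i) (hB i) ⊆ Reg x2 y2 W H →
      Reg (x i) (y i) (wB i) (hB i) ∩ Reg x1 y1 W H = ∅ ∧
      Reg (x i) (y i) (wB i) (hB i) ∩ Reg x2 y2 W H = ∅ := by
    intro i h1 h2
    rcases hsep i with h | h | h
    · exact absurd h h1
    · exact absurd h h2
    · constructor
      · apply Set.eq_empty_of_subset_empty
        rw [← h]
        exact Set.inter_subset_inter_right _ (Set.subset_union_left)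
      · apply Set.eq_empty_of_subset_empty
        rw [← h]
        exact Set.inter_subset_inter_right _ (Set.subset_union_right)
  refine ⟨?_, ?_, ?_⟩
  · intro i
    by_cases h1 : Reg (x i) (y i) (wB i) (hB i) ⊆ Reg x1 y1 W H
    · simp only [if_pos h1]
      have hd := hdvd i (Or.inl h1)
      exact ⟨dvd_add (hal i).1 hd.1, dvd_add (hal i).2 hd.2⟩
    · by_cases h2 : Reg (x i) (y i) (wB i) (hB i) ⊆ Reg x2 y2 W H
      · simp only [if_neg h1, if_pos h2]
        have hd := hdvd i (Or.inr h2)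
        exact ⟨dvd_sub (hal i).1 hd.1, dvd_sub (hal i).2 hd.2⟩
      · simp only [if_neg h1, if_neg h2]
        exact hal i
  · intro i j hij
    have hco := (Reg_disjoint_iff (hpos i).1 (hpos i).2 (hpos j).1 (hpos j).2).1 (hdis i j hij)
    by_cases hi1 : Reg (x i) (y i) (wB i) (hB i) ⊆ Reg x1 y1 W H <;>
      by_cases hj1 : Reg (x j) (y j) (wB j) (hB j) ⊆ Reg x1 y1 W H
    · -- both A
      simp only [if_pos hi1, if_pos hj1]
      rw [Reg_disjoint_iff (hpos i).1 (hpos i).2 (hpos j).1 (hpos j).2]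
      omega
    · simp only [if_pos hi1, if_neg hj1]
      by_cases hj2 : Reg (x j) (y j) (wB j) (hB j) ⊆ Reg x2 y2 W H
      · -- A, B
        simp only [if_pos hj2]
        apply Set.eq_empty_of_subset_empty
        calc _ ⊆ Reg x2 y2 W H ∩ Reg x1 y1 W H :=
              Set.inter_subset_inter (hA2 i hi1) (hB1 j hj2)
          _ = ∅ := hdisjR'
      · -- A, C
        simp only [if_neg hj2]
        apply Set.eq_empty_of_subset_empty
        calc _ ⊆ Reg x2 y2 W H ∩ Reg (x j) (y j) (wB j) (hB j) :=
              Set.inter_subset_inter (hA2 i hi1) (le_refl _)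
          _ = ∅ := by rw [Set.inter_comm]; exact (hCdis j hj1 hj2).2
    · simp only [if_neg hi1, if_pos hj1]
      by_cases hi2 : Reg (x i) (y i) (wB i) (hB i) ⊆ Reg x2 y2 W H
      · -- B, A
        simp only [if_pos hi2]
        apply Set.eq_empty_of_subset_empty
        calc _ ⊆ Reg x1 y1 W H ∩ Reg x2 y2 W H :=
              Set.inter_subset_inter (hB1 i hi2) (hA2 j hj1)
          _ = ∅ := hdisjR
      · -- C, A
        simp only [if_neg hi2]
        apply Set.eq_empty_of_subset_empty
        calc _ ⊆ Reg (x i) (y i) (wB i) (hB i) ∩ Reg x2 y2 W H :=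
              Set.inter_subset_inter (le_refl _) (hA2 j hj1)
          _ = ∅ := (hCdis i hi1 hi2).2
    · simp only [if_neg hi1, if_neg hj1]
      by_cases hi2 : Reg (x i) (y i) (wB i) (hB i) ⊆ Reg x2 y2 W H <;>
        by_cases hj2 : Reg (x j) (y j) (wB j) (hB j) ⊆ Reg x2 y2 W H
      · -- both B
        simp only [if_pos hi2, if_pos hj2]
        rw [Reg_disjoint_iff (hpos i).1 (hpos i).2 (hpos j).1 (hpos j).2]
        omega
      · -- B, C
        simp only [if_pos hi2, if_neg hj2]
        apply Set.eq_empty_of_subset_empty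
        calc _ ⊆ Reg x1 y1 W H ∩ Reg (x j) (y j) (wB j) (hB j) :=
              Set.inter_subset_inter (hB1 i hi2) (le_refl _)
          _ = ∅ := by rw [Set.inter_comm]; exact (hCdis j hj1 hj2).1
      · -- C, B
        simp only [if_pos hj2, if_neg hi2]
        apply Set.eq_empty_of_subset_empty
        calc _ ⊆ Reg (x i) (y i) (wB i) (hB i) ∩ Reg x1 y1 W H :=
              Set.inter_subset_inter (le_refl _) (hB1 j hj2)
          _ = ∅ := (hCdis i hi1 hi2).1
      · -- both C
        simp only [if_neg hi2, if_neg hj2]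
        exact hdis i j hij
  · intro i
    by_cases h1 : Reg (x i) (y i) (wB i) (hB i) ⊆ Reg x1 y1 W H
    · simp only [if_pos h1]
      obtain ⟨d, hd, hsub⟩ := hd2
      exact ⟨d, hd, (hA2 i h1).trans hsub⟩
    · by_cases h2 : Reg (x i) (y i) (wB i) (hB i) ⊆ Reg x2 y2 W H
      · simp only [if_neg h1, if_pos h2]
        obtain ⟨d, hd, hsub⟩ := hd1
        exact ⟨d, hd, (hB1 i h2).trans hsub⟩
      · simp only [if_neg h1, if_neg h2]
        exact hcont i

open scoped Classical

/-- Phase 2: given a solution with block 0 inside `cstar` spanning its full width,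
block 0 can be moved to the bottom-left corner of `cstar`. -/
lemma phase2 (q1 q2 : ℕ) (hq1 : 1 < q1) (hq2 : 1 < q2)
    (m : ℕ) (wB hB : Fin (m+1) → ℤ)
    (hreg : ∀ i, ∃ a b : ℕ, wB i = (q1:ℤ)^a ∧ hB i = (q2:ℤ)^b)
    (𝒟 : Set (ℤ × ℤ × ℤ × ℤ))
    (h𝒟disj : ∀ d ∈ 𝒟, ∀ d' ∈ 𝒟, d ≠ d' → RegT d ∩ RegT d' = ∅)
    (cstar : ℤ × ℤ × ℤ × ℤ) (hcstar : cstar ∈ 𝒟)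
    (c2 : ℕ) (hcs2 : cstar.2.2.2 = (q2:ℤ)^c2) (hcs4 : cstar.2.2.2 ∣ cstar.2.1)
    (hcw : cstar.2.2.1 = wB 0) :
    ∀ n : ℕ, ∀ x y : Fin (m+1) → ℤ, IsSolution (m+1) wB hB 𝒟 x y →
      Reg (x 0) (y 0) (wB 0) (hB 0) ⊆ RegT cstar → x 0 = cstar.1 →
      y 0 - cstar.2.1 = (n : ℤ) →
      ∃ x' y', IsSolution (m+1) wB hB 𝒟 x' y' ∧ x' 0 = cstar.1 ∧ y' 0 = cstar.2.1 := by
  have hq2Z : (1:ℤ) < (q2:ℤ) := by exact_mod_cast hq2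
  have hpos : ∀ i, 0 < wB i ∧ 0 < hB i := by
    intro i
    obtain ⟨a, b, h1, h2⟩ := hreg i
    exact ⟨h1 ▸ pow_pos (by positivity) a, h2 ▸ pow_pos (by positivity) b⟩
  intro n
  induction n using Nat.strong_induction_on with
  | _ n ih =>
    intro x y hsol hin hx0 hyn
    rcases Nat.eq_zero_or_pos n with rfl | hn
    · exact ⟨x, y, hsol, hx0, by push_cast at hyn; omega⟩
    have hnZ : (0:ℤ) < (n:ℤ) := by exact_mod_cast hn
    obtain ⟨a0, f, ha0, hf⟩ := hreg 0
    have hinc := (Reg_subset_iff (hpos 0).1 (hpos 0).2).1 hin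
    -- basic dimensions
    have hc20 : (0:ℤ) < (q2:ℤ)^c2 := pow_pos (by positivity) c2
    have hfc2 : f ≤ c2 := by
      apply exp_le_of_pow_le hq2
      rw [← hf, ← hcs2]
      have := (hpos 0).2
      omega
    set u : ℤ := y 0 - cstar.2.1 with hu
    have hu0 : 0 < u := by omega
    have hudvd : (q2:ℤ)^f ∣ u := by
      apply dvd_sub
      · rw [← hf]; exact (hsol.1 0).2
      · exact (pow_dvd_pow _ hfc2).trans (hcs2 ▸ hcs4)
    have huc2 : u < (q2:ℤ)^c2 := by
      have := (hpos 0).2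
      omega
    set s : ℕ := Nat.findGreatest (fun s => (q2:ℤ)^s ∣ u) c2 with hs
    have hsdvd : (q2:ℤ)^s ∣ u :=
      Nat.findGreatest_spec (P := fun s => (q2:ℤ)^s ∣ u) (Nat.zero_le c2) (by simp)
    have hfs : f ≤ s := Nat.le_findGreatest hfc2 hudvd
    have hsc2 : s < c2 := by
      rcases Nat.lt_or_ge s c2 with h | h
      · exact h
      · exfalso
        have hseq : s = c2 := le_antisymm (Nat.findGreatest_le c2) h
        rw [hseq] at hsdvd
        have := Int.le_of_dvd hu0 hsdvd
        omega
    have hnP : ¬ (q2:ℤ)^(s+1) ∣ u :=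
      Nat.findGreatest_is_greatest (P := fun t => (q2:ℤ)^t ∣ u) (n := c2) (k := s + 1)
        (by omega) (by omega)
    have hq2s : (0:ℤ) < (q2:ℤ)^s := pow_pos (by positivity) s
    have hsy0 : (q2:ℤ)^s ∣ y 0 := by
      have h1 : (q2:ℤ)^s ∣ cstar.2.1 := (pow_dvd_pow _ hsc2.le).trans (hcs2 ▸ hcs4)
      have : y 0 = u + cstar.2.1 := by omega
      rw [this]; exact dvd_add hsdvd h1
    have hus : (q2:ℤ)^s ≤ u := Int.le_of_dvd hu0 hsdvd
    have husub : u + (q2:ℤ)^s ≤ (q2:ℤ)^c2 := by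
      have hd : (q2:ℤ)^s ∣ (q2:ℤ)^c2 - u := dvd_sub (pow_dvd_pow _ hsc2.le) hsdvd
      have := Int.le_of_dvd (by omega) hd
      omega
    have hs1c2 : (q2:ℤ)^(s+1) ∣ (q2:ℤ)^c2 := pow_dvd_pow _ (by omega)
    have hncs1 : ¬ (q2:ℤ)^(s+1) ∣ y 0 := by
      intro hc
      apply hnP
      have h1 : (q2:ℤ)^(s+1) ∣ cstar.2.1 := hs1c2.trans (hcs2 ▸ hcs4)
      exact dvd_sub hc h1
    -- the two slabs
    set y1 : ℤ := y 0 - (q2:ℤ)^s with hy1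
    have hR1sub : Reg cstar.1 y1 (wB 0) ((q2:ℤ)^s) ⊆ RegT cstar := by
      rw [RegT_eq, Reg_subset_iff (hpos 0).1 hq2s, hcw]
      omega
    have hR2sub : Reg cstar.1 (y 0) (wB 0) ((q2:ℤ)^s) ⊆ RegT cstar := by
      rw [RegT_eq, Reg_subset_iff (hpos 0).1 hq2s, hcw]
      omega
    have hRdisj : Reg cstar.1 y1 (wB 0) ((q2:ℤ)^s) ∩ Reg cstar.1 (y 0) (wB 0) ((q2:ℤ)^s) = ∅ := by
      rw [Reg_disjoint_iff (hpos 0).1 hq2s (hpos 0).1 hq2s]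
      omega
    -- block 0 lies in the upper slab R2
    have hblk0R2 : Reg (x 0) (y 0) (wB 0) (hB 0) ⊆ Reg cstar.1 (y 0) (wB 0) ((q2:ℤ)^s) := by
      rw [Reg_subset_iff (hpos 0).1 (hpos 0).2]
      have : (q2:ℤ)^f ≤ (q2:ℤ)^s := pow_le_pow_right₀ (by omega) hfs
      omega
    have hblk0nR1 : ¬ Reg (x 0) (y 0) (wB 0) (hB 0) ⊆ Reg cstar.1 y1 (wB 0) ((q2:ℤ)^s) := by
      intro h
      have := (Reg_subset_iff (hpos 0).1 (hpos 0).2).1 h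
      have := (hpos 0).2
      omega
    -- separation hypothesis
    have hsep : ∀ i, Reg (x i) (y i) (wB i) (hB i) ⊆ Reg cstar.1 y1 (wB 0) ((q2:ℤ)^s) ∨
        Reg (x i) (y i) (wB i) (hB i) ⊆ Reg cstar.1 (y 0) (wB 0) ((q2:ℤ)^s) ∨
        Reg (x i) (y i) (wB i) (hB i) ∩
          (Reg cstar.1 y1 (wB 0) ((q2:ℤ)^s) ∪ Reg cstar.1 (y 0) (wB 0) ((q2:ℤ)^s)) = ∅ := by
      intro i
      rcases eq_or_ne i 0 with rfl | hi0
      · exact Or.inr (Or.inl hblk0R2)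
      obtain ⟨d, hd, hsubd⟩ := hsol.2.2 i
      by_cases hdc : d = cstar
      · subst hdc
        obtain ⟨a, b, ha, hb⟩ := hreg i
        have hbc := (Reg_subset_iff (hpos i).1 (hpos i).2).1 hsubd
        have hyidvd : (q2:ℤ)^b ∣ y i := by rw [← hb]; exact (hsol.1 i).2
        by_cases hbs : b ≤ s
        · have hpow : (q2:ℤ)^b ≤ (q2:ℤ)^s := pow_le_pow_right₀ (by omega) hbs
          by_cases hov1 : y i < y 0 ∧ y1 < y i + hB i
          · left
            have hnest := aligned_nested (u := y i) (v := y1) (by omega : 0 < q2) hbs hyidvd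
              (by rw [hy1]; exact dvd_sub hsy0 (pow_dvd_pow _ le_rfl))
              (by omega) (by omega)
            rw [Reg_subset_iff (hpos i).1 (hpos i).2]
            omega
          · by_cases hov2 : y i < y 0 + (q2:ℤ)^s ∧ y 0 < y i + hB i
            · right; left
              have hnest := aligned_nested (u := y i) (v := y 0) (by omega : 0 < q2) hbs hyidvd
                hsy0 (by omega) (by omega)
              rw [Reg_subset_iff (hpos i).1 (hpos i).2]
              omega
            · right; right
              rw [Set.inter_union_distrib_left, Set.union_empty_iff]
              push_neg at hov1 hov2
              constructor
              · rw [Reg_disjoint_iff (hpos i).1 (hpos i).2 (hpos 0).1 hq2s]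
                omega
              · rw [Reg_disjoint_iff (hpos i).1 (hpos i).2 (hpos 0).1 hq2s]
                omega
        · -- tall block: cannot meet either slab
          right; right
          by_contra hne
          obtain ⟨r, hr1, hr2⟩ := Set.nonempty_iff_ne_empty.2 hne
          rw [mem_Reg] at hr1
          have hrY : y1 ≤ r.2 ∧ r.2 < y 0 + (q2:ℤ)^s := by
            rcases hr2 with hr2 | hr2 <;> rw [mem_Reg] at hr2 <;>
              constructor <;> omega
          have hsy : (q2:ℤ)^s ∣ y i := (pow_dvd_pow _ (by omega : s ≤ b)).trans hyidvd
          have hs1y : (q2:ℤ)^(s+1) ∣ y i := (pow_dvd_pow _ (by omega : s+1 ≤ b)).trans hyidvd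
          have hcov : y i ≤ y 0 ∧ y 0 < y i + hB i := by
            constructor
            · by_contra hcc
              push_neg at hcc
              have hd1 : (q2:ℤ)^s ∣ y i - y 0 := dvd_sub hsy hsy0
              have := Int.le_of_dvd (by omega) hd1
              omega
            · by_contra hcc
              push_neg at hcc
              have hit : (q2:ℤ)^(s+1) ∣ y i + hB i := by
                rw [hb]
                exact dvd_add hs1y (pow_dvd_pow _ (by omega : s+1 ≤ b))
              have hd1 : (q2:ℤ)^s ∣ y 0 - (y i + hB i) := by
                apply dvd_sub hsy0
                exact (pow_dvd_pow _ (by omega : s ≤ s+1)).trans hit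
              rcases eq_or_lt_of_le (show (0:ℤ) ≤ y 0 - (y i + hB i) by omega) with heq | hlt
              · apply hncs1
                have : y 0 = y i + hB i := by omega
                rw [this]; exact hit
              · have := Int.le_of_dvd hlt hd1
                have := (hpos i).2
                omega
          -- block i overlaps block 0: contradiction
          have hover : (Reg (x i) (y i) (wB i) (hB i) ∩
              Reg (x 0) (y 0) (wB 0) (hB 0)).Nonempty := by
            apply (Reg_inter_nonempty_iff (hpos i).1 (hpos i).2 (hpos 0).1 (hpos 0).2).2
            have hwi := (hpos i).1
            have hh0 := (hpos 0).2
            constructor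
            · constructor <;> omega
            · constructor <;> omega
          rw [hsol.2.1 i 0 hi0] at hover
          exact Set.not_nonempty_empty hover
      · -- block in another piece: disjoint from cstar
        right; right
        apply Set.eq_empty_of_subset_empty
        have h1 : Reg cstar.1 y1 (wB 0) ((q2:ℤ)^s) ∪ Reg cstar.1 (y 0) (wB 0) ((q2:ℤ)^s) ⊆
            RegT cstar := Set.union_subset hR1sub hR2sub
        calc Reg (x i) (y i) (wB i) (hB i) ∩ _ ⊆ RegT d ∩ RegT cstar :=
              Set.inter_subset_inter hsubd h1
          _ = ∅ := h𝒟disj d hd cstar hcstar hdc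
    -- the swap
    have hswap := swap_sol (m+1) wB hB 𝒟 x y hpos hsol cstar.1 y1 cstar.1 (y 0)
      (wB 0) ((q2:ℤ)^s) (hpos 0).1 hq2s hRdisj ⟨cstar, hcstar, hR1sub⟩ ⟨cstar, hcstar, hR2sub⟩
      (by
        intro i hi
        constructor
        · simp
        · have hle : hB i ≤ (q2:ℤ)^s := by
            rcases hi with hi | hi <;>
              have := (Reg_subset_iff (hpos i).1 (hpos i).2).1 hi <;> omega
          obtain ⟨a, b, ha, hb⟩ := hreg i
          have hbs : b ≤ s := exp_le_of_pow_le hq2 (hb ▸ hle)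
          have : y 0 - y1 = (q2:ℤ)^s := by rw [hy1]; ring
          rw [this, hb]
          exact pow_dvd_pow _ hbs)
      hsep
    refine ih (n - (q2^s : ℕ)) ?_ _ _ hswap ?_ ?_ ?_
    · have : 0 < q2^s := Nat.pow_pos (by omega)
      omega
    · -- new block-0 region inside cstar
      simp only [if_neg hblk0nR1, if_pos hblk0R2]
      rw [RegT_eq, Reg_subset_iff (hpos 0).1 (hpos 0).2]
      have := (hpos 0).2
      omega
    · simp only [if_neg hblk0nR1, if_pos hblk0R2]
      omega
    · simp only [if_neg hblk0nR1, if_pos hblk0R2]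
      have hcast : ((q2^s : ℕ) : ℤ) = (q2:ℤ)^s := by push_cast; ring
      have hles : (q2^s : ℕ) ≤ n := by
        have : (q2:ℤ)^s ≤ (n:ℤ) := by omega
        omega
      push_cast [Nat.cast_sub hles]
      omega

/-- Core exchange lemma (orientation: block 0 has full width). -/
lemma core (q1 q2 : ℕ) (hq1 : 1 < q1) (hq2 : 1 < q2)
    (m : ℕ) (wB hB : Fin (m+1) → ℤ)
    (hreg : ∀ i, ∃ a b : ℕ, wB i = (q1:ℤ)^a ∧ hB i = (q2:ℤ)^b)
    (hwdvd : ∀ i, wB i ∣ wB 0)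
    (𝒟 : Set (ℤ × ℤ × ℤ × ℤ))
    (h𝒟reg : ∀ d ∈ 𝒟, ∃ a b : ℕ, d.2.2.1 = (q1:ℤ)^a ∧ d.2.2.2 = (q2:ℤ)^b ∧
        d.2.2.1 ∣ d.1 ∧ d.2.2.2 ∣ d.2.1)
    (h𝒟disj : ∀ d ∈ 𝒟, ∀ d' ∈ 𝒟, d ≠ d' → RegT d ∩ RegT d' = ∅)
    (hwle : ∀ d ∈ 𝒟, d.2.2.1 ≤ wB 0)
    (cstar : ℤ × ℤ × ℤ × ℤ) (hcstar : cstar ∈ 𝒟)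
    (hfit : wB 0 ≤ cstar.2.2.1 ∧ hB 0 ≤ cstar.2.2.2)
    (hmin' : ∀ d ∈ 𝒟, wB 0 ≤ d.2.2.1 → hB 0 ≤ d.2.2.2 → cstar.2.2.2 ≤ d.2.2.2)
    (x y : Fin (m+1) → ℤ) (hsol : IsSolution (m+1) wB hB 𝒟 x y) :
    ∃ x' y', IsSolution (m+1) wB hB 𝒟 x' y' ∧ x' 0 = cstar.1 ∧ y' 0 = cstar.2.1 := by
  classical
  have hq2Z : (1:ℤ) < (q2:ℤ) := by exact_mod_cast hq2
  have hpos : ∀ i, 0 < wB i ∧ 0 < hB i := by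
    intro i
    obtain ⟨a, b, h1, h2⟩ := hreg i
    exact ⟨h1 ▸ pow_pos (by positivity) a, h2 ▸ pow_pos (by positivity) b⟩
  have hcw : cstar.2.2.1 = wB 0 := le_antisymm (hwle cstar hcstar) hfit.1
  obtain ⟨ac, c2, hc1, hc2, hc3, hc4⟩ := h𝒟reg cstar hcstar
  obtain ⟨a0, f, ha0, hf0⟩ := hreg 0
  have hfc2 : f ≤ c2 := exp_le_of_pow_le hq2 (by rw [← hf0, ← hc2]; exact hfit.2)
  have hc2pos : (0:ℤ) < (q2:ℤ)^c2 := pow_pos (by positivity) c2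
  obtain ⟨P, hPD, hsubP⟩ := hsol.2.2 0
  obtain ⟨ap, bp, hp1, hp2, hp3, hp4⟩ := h𝒟reg P hPD
  have hPc := (Reg_subset_iff (hpos 0).1 (hpos 0).2).1 hsubP
  have hPw : P.2.2.1 = wB 0 := le_antisymm (hwle P hPD) (by omega)
  have hx0P : x 0 = P.1 := by omega
  have hPh : cstar.2.2.2 ≤ P.2.2.2 := hmin' P hPD (by omega) (by omega)
  have hc2bp : c2 ≤ bp := exp_le_of_pow_le hq2 (by rw [← hc2, ← hp2]; exact hPh)
  by_cases hPcs : P = cstar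
  · -- already in cstar; only phase 2 needed
    subst hPcs
    have h0 : (0:ℤ) ≤ y 0 - P.2.1 := by omega
    exact phase2 q1 q2 hq1 hq2 m wB hB hreg 𝒟 h𝒟disj P hPD c2 hc2 hc4 hcw
      (y 0 - P.2.1).toNat x y hsol hsubP (by omega) (by omega)
  · -- phase 1: swap the contents of cstar with a slab of P containing block 0
    set z : ℤ := istart q2 c2 (y 0) with hz
    have hzdvd : (q2:ℤ)^c2 ∣ z := istart_dvd q2 c2 (y 0)
    have hzle := istart_le (show 0 < q2 by omega) c2 (y 0)
    have hh0pos := (hpos 0).2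
    -- the slab fits in P vertically
    have hslabP : P.2.1 ≤ z ∧ z + (q2:ℤ)^c2 ≤ P.2.1 + P.2.2.2 := by
      have hnest := aligned_nested (u := z) (v := P.2.1) (by omega : 0 < q2) hc2bp hzdvd
        (hp2 ▸ hp4) (by omega) (by rw [← hp2]; omega)
      rw [← hp2] at hnest
      omega
    -- block 0 vertically inside the slab
    have hblk0slab : z ≤ y 0 ∧ y 0 + hB 0 ≤ z + (q2:ℤ)^c2 := by
      have hydvd : (q2:ℤ)^f ∣ y 0 := hf0 ▸ (hsol.1 0).2
      have hfpos : (0:ℤ) < (q2:ℤ)^f := pow_pos (by positivity) f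
      have hnest := aligned_nested (u := y 0) (v := z) (by omega : 0 < q2) hfc2 hydvd hzdvd
        (by omega) (by omega)
      omega
    have hcsP : RegT cstar ∩ RegT P = ∅ := h𝒟disj cstar hcstar P hPD (fun h => hPcs h.symm)
    have hR1eq : Reg cstar.1 cstar.2.1 (wB 0) cstar.2.2.2 = RegT cstar := by
      rw [RegT_eq, hcw]
    have hR2P : Reg P.1 z (wB 0) cstar.2.2.2 ⊆ RegT P := by
      rw [RegT_eq, Reg_subset_iff (hpos 0).1 (by omega), hPw]
      omega
    have hRdisj : Reg cstar.1 cstar.2.1 (wB 0) cstar.2.2.2 ∩ Reg P.1 z (wB 0) cstar.2.2.2 = ∅ := by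
      apply Set.eq_empty_of_subset_empty
      calc _ ⊆ RegT cstar ∩ RegT P := Set.inter_subset_inter hR1eq.le hR2P
        _ = ∅ := hcsP
    have hblk00 : Reg (x 0) (y 0) (wB 0) (hB 0) ⊆ Reg P.1 z (wB 0) cstar.2.2.2 := by
      rw [Reg_subset_iff (hpos 0).1 (hpos 0).2]
      omega
    -- separation
    have hsep : ∀ i, Reg (x i) (y i) (wB i) (hB i) ⊆ Reg cstar.1 cstar.2.1 (wB 0) cstar.2.2.2 ∨
        Reg (x i) (y i) (wB i) (hB i) ⊆ Reg P.1 z (wB 0) cstar.2.2.2 ∨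
        Reg (x i) (y i) (wB i) (hB i) ∩
          (Reg cstar.1 cstar.2.1 (wB 0) cstar.2.2.2 ∪ Reg P.1 z (wB 0) cstar.2.2.2) = ∅ := by
      intro i
      obtain ⟨d, hd, hsubd⟩ := hsol.2.2 i
      by_cases hdc : d = cstar
      · left
        rw [hR1eq]
        exact hdc ▸ hsubd
      by_cases hdP : d = P
      · rw [hdP] at hsubd
        rcases eq_or_ne i 0 with rfl | hi0
        · exact Or.inr (Or.inl hblk00)
        obtain ⟨a, b, ha, hb⟩ := hreg i
        have hbc := (Reg_subset_iff (hpos i).1 (hpos i).2).1 hsubd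
        have hyidvd : (q2:ℤ)^b ∣ y i := hb ▸ (hsol.1 i).2
        by_cases hov : y i < z + (q2:ℤ)^c2 ∧ z < y i + hB i
        · by_cases hbs : b ≤ c2
          · right; left
            have hnest := aligned_nested (u := y i) (v := z) (by omega : 0 < q2) hbs hyidvd
              hzdvd (by omega) (by omega)
            rw [Reg_subset_iff (hpos i).1 (hpos i).2]
            omega
          · -- tall block crossing the slab would overlap block 0
            exfalso
            have hnest := aligned_nested (u := z) (v := y i) (by omega : 0 < q2)
              (by omega : c2 ≤ b) hzdvd hyidvd (by omega) (by omega)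
            have hover : (Reg (x i) (y i) (wB i) (hB i) ∩
                Reg (x 0) (y 0) (wB 0) (hB 0)).Nonempty := by
              apply (Reg_inter_nonempty_iff (hpos i).1 (hpos i).2 (hpos 0).1 (hpos 0).2).2
              have := (hpos i).1
              have := (hpos 0).2
              have := (hpos i).2
              constructor
              · constructor <;> omega
              · constructor <;> omega
            rw [hsol.2.1 i 0 hi0] at hover
            exact Set.not_nonempty_empty hover
        · right; right
          rw [Set.inter_union_distrib_left, Set.union_empty_iff]
          push_neg at hov
          constructor
          · apply Set.eq_empty_of_subset_empty
            calc _ ⊆ RegT P ∩ RegT cstar := by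
                  rw [hR1eq]
                  exact Set.inter_subset_inter hsubd (le_refl _)
              _ = ∅ := by rw [Set.inter_comm]; exact hcsP
          · rw [Reg_disjoint_iff (hpos i).1 (hpos i).2 (hpos 0).1 (by omega)]
            omega
      · -- block in a third piece
        right; right
        apply Set.eq_empty_of_subset_empty
        intro p hp
        rcases hp.2 with hp2' | hp2'
        · have : p ∈ RegT d ∩ RegT cstar := ⟨hsubd hp.1, hR1eq ▸ hp2'⟩
          rw [h𝒟disj d hd cstar hcstar hdc] at this
          exact this
        · have : p ∈ RegT d ∩ RegT P := ⟨hsubd hp.1, hR2P hp2'⟩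
          rw [h𝒟disj d hd P hPD hdP] at this
          exact this
    have hswap := swap_sol (m+1) wB hB 𝒟 x y hpos hsol cstar.1 cstar.2.1 P.1 z
      (wB 0) cstar.2.2.2 (hpos 0).1 (by omega) hRdisj
      ⟨cstar, hcstar, hR1eq.le⟩ ⟨P, hPD, hR2P⟩
      (by
        intro i hi
        constructor
        · apply dvd_sub
          · exact (hwdvd i).trans (by rw [← hPw]; exact hp3)
          · exact (hwdvd i).trans (by rw [← hcw]; exact hc3)
        · have hle : hB i ≤ cstar.2.2.2 := by
            rcases hi with hi | hi <;>
              have := (Reg_subset_iff (hpos i).1 (hpos i).2).1 hi <;> omega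
          obtain ⟨a, b, ha, hb⟩ := hreg i
          have hbs : b ≤ c2 := exp_le_of_pow_le hq2 (by rw [← hb, ← hc2]; exact hle)
          have h1 : hB i ∣ (q2:ℤ)^c2 := hb ▸ pow_dvd_pow _ hbs
          apply h1.trans
          apply dvd_sub hzdvd (hc2 ▸ hc4))
      hsep
    -- block 0 was in the slab branch
    have hblk0nR1 : ¬ Reg (x 0) (y 0) (wB 0) (hB 0) ⊆ Reg cstar.1 cstar.2.1 (wB 0) cstar.2.2.2 := by
      intro h
      have hne : (Reg (x 0) (y 0) (wB 0) (hB 0)).Nonempty := Reg_nonempty (hpos 0).1 (hpos 0).2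
      obtain ⟨p, hp⟩ := hne
      have : p ∈ RegT cstar ∩ RegT P := ⟨hR1eq ▸ h hp, hsubP hp⟩
      rw [hcsP] at this
      exact this
    have hnewx0 : (x 0 + (P.1 - cstar.1) = cstar.1 + (x 0 - cstar.1) + (P.1 - cstar.1)) := by ring
    refine phase2 q1 q2 hq1 hq2 m wB hB hreg 𝒟 h𝒟disj cstar hcstar c2 hc2 hc4 hcw
      (y 0 - z).toNat _ _ hswap ?_ ?_ ?_
    · simp only [if_neg hblk0nR1, if_pos hblk00]
      rw [RegT_eq, Reg_subset_iff (hpos 0).1 (hpos 0).2]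
      omega
    · simp only [if_neg hblk0nR1, if_pos hblk00]
      omega
    · simp only [if_neg hblk0nR1, if_pos hblk00]
      have : (0:ℤ) ≤ y 0 - z := by omega
      omega

lemma sizeLE_max_le {s t : ℤ × ℤ} (h : sizeLE s t) : max s.1 s.2 ≤ max t.1 t.2 := by
  unfold sizeLE sizeLT at h
  rcases h with rfl | h1 | ⟨h1, -⟩ | ⟨h1, -⟩
  · exact le_refl _
  · exact h1.le
  · exact h1.le
  · exact h1.le

lemma sizeLE_snd_le {w h h' : ℤ} (hs : sizeLE (w, h) (w, h')) : h ≤ h' := by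
  unfold sizeLE sizeLT at hs
  rcases hs with heq | h1 | ⟨-, h2⟩ | ⟨-, -, h3⟩
  · exact (Prod.mk.injEq _ _ _ _ ▸ heq).2.le
  · simp only at h1
    by_contra hc
    push_neg at hc
    exact absurd h1 (not_lt.2 (max_le_max (le_refl w) hc.le))
  · simp only at h2
    exact absurd h2 (lt_irrefl w)
  · exact h3.le

lemma sizeLE_fst_le {w w' h : ℤ} (hs : sizeLE (w, h) (w', h)) : w ≤ w' := by
  unfold sizeLE sizeLT at hs
  rcases hs with heq | h1 | ⟨-, h2⟩ | ⟨-, h2, -⟩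
  · exact (Prod.mk.injEq _ _ _ _ ▸ heq).1.le
  · simp only at h1
    by_contra hc
    push_neg at hc
    exact absurd h1 (not_lt.2 (max_le_max hc.le (le_refl h)))
  · exact h2.le
  · exact h2.le

lemma IsSolution_sw4 {m : ℕ} {wB hB : Fin m → ℤ} {𝒟 : Set (ℤ × ℤ × ℤ × ℤ)}
    {x y : Fin m → ℤ} (h : IsSolution m wB hB 𝒟 x y) :
    IsSolution m hB wB (sw4 '' 𝒟) y x := by
  obtain ⟨h1, h2, h3⟩ := h
  refine ⟨fun i => ⟨(h1 i).2, (h1 i).1⟩, ?_, ?_⟩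
  · intro i j hij
    rw [← Reg_swap (x i) (y i) (wB i) (hB i), ← Reg_swap (x j) (y j) (wB j) (hB j),
      ← swap_inter, swap_eq_empty]
    exact h2 i j hij
  · intro i
    obtain ⟨d, hd, hsub⟩ := h3 i
    exact ⟨sw4 d, ⟨d, hd, rfl⟩, by
      rw [← Reg_swap (x i) (y i) (wB i) (hB i), RegT_sw4]
      exact Set.image_mono hsub⟩


/-- greedy step correctness: if `(B,𝒞)` has a solution, `B1` is the
largest block, `ŝ` is the least size dominating all block sizes, and `C*` is a
size-minimal container among those of `σ(𝒞,ŝ)` large enough to contain `B1`, then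
there is a solution (to the cut problem, equivalently to `(B,𝒞)`) in which `B1`
is placed at the lower-left corner of `C*`. -/
theorem stmt12 (q1 q2 : ℕ) (hq1 : 1 < q1) (hq2 : 1 < q2)
    (m : ℕ) (wB hB : Fin (m + 1) → ℤ)
    (hBreg : ∀ i, ∃ a b : ℕ, wB i = (q1 : ℤ) ^ a ∧ hB i = (q2 : ℤ) ^ b)
    (hsorted : ∀ i j : Fin (m + 1), i ≤ j → sizeLE (wB j, hB j) (wB i, hB i))
    (𝒞 : Set (ℤ × ℤ × ℤ × ℤ))
    (h𝒞pos : ∀ c ∈ 𝒞, 0 < c.2.2.1 ∧ 0 < c.2.2.2)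
    (h𝒞disj : ∀ c ∈ 𝒞, ∀ c' ∈ 𝒞, c ≠ c' → RegT c ∩ RegT c' = ∅)
    (hsol : ∃ x y, IsSolution (m + 1) wB hB 𝒞 x y)
    (sw sh : ℤ)
    (hsw : IsGreatest (Set.range wB) sw) (hsh : IsGreatest (Set.range hB) sh)
    (cut : (ℤ × ℤ × ℤ × ℤ) → Set (ℤ × ℤ × ℤ × ℤ))
    (hcut : ∀ c ∈ 𝒞, SigmaCut q1 q2 sw sh c (cut c))
    (𝒞σ : Set (ℤ × ℤ × ℤ × ℤ)) (h𝒞σ : 𝒞σ = ⋃ c ∈ 𝒞, cut c)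
    (cstar : ℤ × ℤ × ℤ × ℤ) (hcstar : cstar ∈ 𝒞σ)
    (hfit : wB 0 ≤ cstar.2.2.1 ∧ hB 0 ≤ cstar.2.2.2)
    (hminimal : ∀ c ∈ 𝒞σ, wB 0 ≤ c.2.2.1 → hB 0 ≤ c.2.2.2 →
      sizeLE (cstar.2.2.1, cstar.2.2.2) (c.2.2.1, c.2.2.2)) :
    ∃ x y, IsSolution (m + 1) wB hB 𝒞σ x y ∧ x 0 = cstar.1 ∧ y 0 = cstar.2.1 := by
  classical
  obtain ⟨x, y, hsolC⟩ := hsol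
  have hq1Z : (1:ℤ) < (q1:ℤ) := by exact_mod_cast hq1
  have hq2Z : (1:ℤ) < (q2:ℤ) := by exact_mod_cast hq2
  obtain ⟨i0, hi0⟩ := hsw.1
  obtain ⟨E, fi0, hE, hfi0⟩ := hBreg i0
  have hswE : sw = (q1:ℤ)^E := by rw [← hi0, hE]
  obtain ⟨j0, hj0⟩ := hsh.1
  obtain ⟨aj0, F, haj0, hF⟩ := hBreg j0
  have hshF : sh = (q2:ℤ)^F := by rw [← hj0, hF]
  -- structure of the pieces of 𝒞σ
  have hDreg : ∀ d ∈ 𝒞σ, ∃ a b : ℕ, d.2.2.1 = (q1:ℤ)^a ∧ d.2.2.2 = (q2:ℤ)^b ∧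
      d.2.2.1 ∣ d.1 ∧ d.2.2.2 ∣ d.2.1 ∧ d.2.2.1 ≤ sw ∧ d.2.2.2 ≤ sh := by
    intro d hd
    rw [h𝒞σ] at hd
    obtain ⟨c, hc, hdc⟩ := Set.mem_iUnion₂.1 hd
    exact (hcut c hc).1.2.1 d hdc
  have hDdisj : ∀ d ∈ 𝒞σ, ∀ d' ∈ 𝒞σ, d ≠ d' → RegT d ∩ RegT d' = ∅ := by
    intro d hd d' hd' hne
    rw [h𝒞σ] at hd hd'
    obtain ⟨c, hc, hdc⟩ := Set.mem_iUnion₂.1 hd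
    obtain ⟨c', hc', hdc'⟩ := Set.mem_iUnion₂.1 hd'
    by_cases hcc : c = c'
    · subst hcc
      exact (hcut c hc).1.2.2.1 d hdc d' hdc' hne
    · apply Set.eq_empty_of_subset_empty
      have h1 : RegT d ⊆ RegT c := by
        rw [← (hcut c hc).1.2.2.2]
        exact Set.subset_biUnion_of_mem hdc
      have h2 : RegT d' ⊆ RegT c' := by
        rw [← (hcut c' hc').1.2.2.2]
        exact Set.subset_biUnion_of_mem hdc'
      calc RegT d ∩ RegT d' ⊆ RegT c ∩ RegT c' := Set.inter_subset_inter h1 h2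
        _ = ∅ := h𝒞disj c hc c' hc' hcc
  -- refine the solution to the cut containers
  have hsolσ : IsSolution (m+1) wB hB 𝒞σ x y := by
    refine ⟨hsolC.1, hsolC.2.1, ?_⟩
    intro i
    obtain ⟨c, hc, hsubc⟩ := hsolC.2.2 i
    obtain ⟨a, b, ha, hb⟩ := hBreg i
    have haE : a ≤ E := exp_le_of_pow_le hq1 (by rw [← ha, ← hswE]; exact hsw.2 ⟨i, rfl⟩)
    have hbF : b ≤ F := exp_le_of_pow_le hq2 (by rw [← hb, ← hshF]; exact hsh.2 ⟨i, rfl⟩)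
    have hcut' : SigmaCut q1 q2 ((q1:ℤ)^E) ((q2:ℤ)^F) c (cut c) := by
      rw [← hswE, ← hshF]
      exact hcut c hc
    obtain ⟨d, hdc, hsubd⟩ := keyL q1 q2 hq1 hq2 E F c (cut c) hcut' (x i) (y i) a b haE hbF
      (by rw [← ha]; exact (hsolC.1 i).1) (by rw [← hb]; exact (hsolC.1 i).2)
      (by rw [← ha, ← hb]; exact hsubc)
    refine ⟨d, ?_, by rw [ha, hb]; exact hsubd⟩
    rw [h𝒞σ]
    exact Set.mem_biUnion hc hdc
  clear hsolC
  -- case split on the orientation of the largest block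
  rcases le_total (hB 0) (wB 0) with hcase | hcase
  · -- block 0 has full width
    have hsw0 : sw = wB 0 := by
      apply le_antisymm ?_ (hsw.2 ⟨0, rfl⟩)
      have h1 := sizeLE_max_le (hsorted 0 i0 (Fin.zero_le i0))
      simp only at h1
      have h3 : max (wB 0) (hB 0) = wB 0 := max_eq_left hcase
      rw [h3] at h1
      calc sw = wB i0 := hi0.symm
        _ ≤ max (wB i0) (hB i0) := le_max_left _ _
        _ ≤ wB 0 := h1
    have hw0E : wB 0 = (q1:ℤ)^E := by rw [← hsw0, hswE]
    have hwle : ∀ d ∈ 𝒞σ, d.2.2.1 ≤ wB 0 := by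
      intro d hd
      rw [← hsw0]
      exact (hDreg d hd).choose_spec.choose_spec.2.2.2.2.1
    have hwdvd : ∀ i, wB i ∣ wB 0 := by
      intro i
      obtain ⟨a, b, ha, hb⟩ := hBreg i
      have haE : a ≤ E := exp_le_of_pow_le hq1 (by rw [← ha, ← hswE]; exact hsw.2 ⟨i, rfl⟩)
      rw [ha, hw0E]
      exact pow_dvd_pow _ haE
    have hmin2 : ∀ d ∈ 𝒞σ, wB 0 ≤ d.2.2.1 → hB 0 ≤ d.2.2.2 → cstar.2.2.2 ≤ d.2.2.2 := by
      intro d hd h1 h2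
      have hdw : d.2.2.1 = wB 0 := le_antisymm (hwle d hd) h1
      have hcsw : cstar.2.2.1 = wB 0 := le_antisymm (hwle cstar hcstar) hfit.1
      have hs := hminimal d hd h1 h2
      rw [hcsw, hdw] at hs
      exact sizeLE_snd_le hs
    exact core q1 q2 hq1 hq2 m wB hB hBreg hwdvd 𝒞σ
      (fun d hd => by
        obtain ⟨a, b, h1, h2, h3, h4, -⟩ := hDreg d hd
        exact ⟨a, b, h1, h2, h3, h4⟩)
      hDdisj hwle cstar hcstar hfit hmin2 x y hsolσ
  · -- block 0 has full height: transpose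
    have hsh0 : sh = hB 0 := by
      apply le_antisymm ?_ (hsh.2 ⟨0, rfl⟩)
      have h1 := sizeLE_max_le (hsorted 0 j0 (Fin.zero_le j0))
      simp only at h1
      have h3 : max (wB 0) (hB 0) = hB 0 := max_eq_right hcase
      rw [h3] at h1
      calc sh = hB j0 := hj0.symm
        _ ≤ max (wB j0) (hB j0) := le_max_right _ _
        _ ≤ hB 0 := h1
    have hh0F : hB 0 = (q2:ℤ)^F := by rw [← hsh0, hshF]
    have hsolT : IsSolution (m+1) hB wB (sw4 '' 𝒞σ) y x := IsSolution_sw4 hsolσ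
    have hregT : ∀ i, ∃ a b : ℕ, hB i = (q2:ℤ)^a ∧ wB i = (q1:ℤ)^b := by
      intro i
      obtain ⟨a, b, h1, h2⟩ := hBreg i
      exact ⟨b, a, h2, h1⟩
    have hwdvdT : ∀ i, hB i ∣ hB 0 := by
      intro i
      obtain ⟨a, b, ha, hb⟩ := hBreg i
      have hbF : b ≤ F := exp_le_of_pow_le hq2 (by rw [← hb, ← hshF]; exact hsh.2 ⟨i, rfl⟩)
      rw [hb, hh0F]
      exact pow_dvd_pow _ hbF
    have hDregT : ∀ d ∈ sw4 '' 𝒞σ, ∃ a b : ℕ, d.2.2.1 = (q2:ℤ)^a ∧ d.2.2.2 = (q1:ℤ)^b ∧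
        d.2.2.1 ∣ d.1 ∧ d.2.2.2 ∣ d.2.1 := by
      rintro d ⟨e, he, rfl⟩
      obtain ⟨a, b, h1, h2, h3, h4, -⟩ := hDreg e he
      exact ⟨b, a, h2, h1, h4, h3⟩
    have hDdisjT : ∀ d ∈ sw4 '' 𝒞σ, ∀ d' ∈ sw4 '' 𝒞σ, d ≠ d' → RegT d ∩ RegT d' = ∅ := by
      rintro d ⟨e, he, rfl⟩ d' ⟨e', he', rfl⟩ hne
      have hne2 : e ≠ e' := fun hc => hne (by rw [hc])
      rw [RegT_sw4, RegT_sw4, ← swap_inter, swap_eq_empty]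
      exact hDdisj e he e' he' hne2
    have hwleT : ∀ d ∈ sw4 '' 𝒞σ, d.2.2.1 ≤ hB 0 := by
      rintro d ⟨e, he, rfl⟩
      show e.2.2.2 ≤ hB 0
      rw [← hsh0]
      exact (hDreg e he).choose_spec.choose_spec.2.2.2.2.2
    have hminT : ∀ d ∈ sw4 '' 𝒞σ, hB 0 ≤ d.2.2.1 → wB 0 ≤ d.2.2.2 →
        (sw4 cstar).2.2.2 ≤ d.2.2.2 := by
      rintro d ⟨e, he, rfl⟩ h1 h2
      show cstar.2.2.1 ≤ e.2.2.1
      have hdh : e.2.2.2 = hB 0 := le_antisymm (by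
        rw [← hsh0]
        exact (hDreg e he).choose_spec.choose_spec.2.2.2.2.2) h1
      have hch : cstar.2.2.2 = hB 0 := le_antisymm (by
        rw [← hsh0]
        exact (hDreg cstar hcstar).choose_spec.choose_spec.2.2.2.2.2) hfit.2
      have hs := hminimal e he h2 h1
      rw [hch, hdh] at hs
      exact sizeLE_fst_le hs
    obtain ⟨xT, yT, hsolF, hxT, hyT⟩ := core q2 q1 hq2 hq1 m hB wB hregT hwdvdT
      (sw4 '' 𝒞σ) hDregT hDdisjT hwleT (sw4 cstar) ⟨cstar, hcstar, rfl⟩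
      ⟨hfit.2, hfit.1⟩ hminT y x hsolT
    have himg : sw4 '' (sw4 '' 𝒞σ) = 𝒞σ := by
      rw [← Set.image_comp]
      have hid : sw4 ∘ sw4 = id := funext sw4_sw4
      rw [hid, Set.image_id]
    have hback : IsSolution (m+1) wB hB 𝒞σ yT xT := by
      have h2 := IsSolution_sw4 hsolF
      rwa [himg] at h2
    exact ⟨yT, xT, hback, hyT, hxT⟩
end
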